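/- arXiv:2208.13576 — 8 statements merged into one kernel-verified Lean document; each statement's English description precedes it below -/
import Mathlib

section
/- Let X be a real Banach space whose dual X* is separable, let 𝕂 ∈ {ℝ, ℂ} and let H be a Hilbert space over 𝕂. Suppose the bilinear map (b, f) ↦ T_b f from X** × H to H satisfies condition (A1) with constants 0 < c ≤ C. Define T̃_b(f, g) := (T_b* g, T_b f) on the Hilbert space direct sum H × H. Then (b, (f, g)) ↦ T̃_b(f, g) is a bilinear map from X** × (H × H) to H × H satisfying condition (A1) with the same constants c, C, and satisfying condition (A2). Moreover, if T itself also satisfies condition (A2), then for all b ∈ X** and f, g ∈ H one has ⟨T̃_b(f, g), (f, g)⟩_{H×H} = 2·Re⟨T_b f, g⟩_H, which for b ∈ X equals ⟨b, Q'_f g⟩, where Q'_f g ∈ X* is the Gâteaux derivative of the quadratic map Q (given by ⟨b, Qω⟩ = ⟨T_b ω, ω⟩_H) at f in direction g. -/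
open NormedSpace Filter Topology

noncomputable section

open Metric in
private lemma adjoint_isCompactOperator' {𝕜 H : Type*} [RCLike 𝕜] [NormedAddCommGroup H]
    [InnerProductSpace 𝕜 H] [CompleteSpace H] {A : H →L[𝕜] H}
    (hA : IsCompactOperator A) :
    IsCompactOperator (ContinuousLinearMap.adjoint A) := by
  set A' := ContinuousLinearMap.adjoint A with hA'
  set B : H →L[𝕜] H := A ∘L A' with hB
  have hBc : IsCompactOperator B := hA.comp_clm A'
  have key : ∀ u v : H, ‖A' u - A' v‖ ^ 2 ≤ ‖u - v‖ * ‖B u - B v‖ := by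
    intro u v
    have h1 : ‖A' u - A' v‖ ^ 2 = RCLike.re (inner 𝕜 (A' (u - v)) (A' (u - v)) : 𝕜) := by
      rw [map_sub, inner_self_eq_norm_sq]
    have h2 : (inner 𝕜 (A' (u - v)) (A' (u - v)) : 𝕜) = inner 𝕜 (u - v) (A (A' (u - v))) := by
      rw [hA', ContinuousLinearMap.adjoint_inner_left]
    rw [h1, h2]
    calc RCLike.re (inner 𝕜 (u - v) (A (A' (u - v))) : 𝕜)
        ≤ ‖u - v‖ * ‖A (A' (u - v))‖ := re_inner_le_norm _ _
      _ = ‖u - v‖ * ‖B u - B v‖ := by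
          congr 1
          rw [hB]
          simp [map_sub]
  have tb : TotallyBounded (A' '' ball (0 : H) 1) := by
    rw [Metric.totallyBounded_iff]
    intro ε hε
    obtain ⟨K, hK, hKsub⟩ :=
      hBc.image_subset_compact_of_bounded (isBounded_ball (x := (0:H)) (r := 1))
    have tbB : TotallyBounded ((B : H → H) '' ball (0 : H) 1) := hK.totallyBounded.subset hKsub
    set δ : ℝ := ε ^ 2 / 8 with hδdef
    have hδ : 0 < δ := by positivity
    obtain ⟨t, htf, htcov⟩ := Metric.totallyBounded_iff.mp tbB δ hδ
    classical
    set F : H → H := fun y =>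
      if h : ∃ u, u ∈ ball (0 : H) 1 ∧ B u ∈ ball y δ then A' h.choose else 0 with hF
    refine ⟨F '' t, htf.image F, ?_⟩
    rintro x ⟨u, hu, rfl⟩
    have : B u ∈ (B : H → H) '' ball (0 : H) 1 := ⟨u, hu, rfl⟩
    have := htcov this
    simp only [Set.mem_iUnion] at this
    obtain ⟨y, hy, hBy⟩ := this
    have hcond : ∃ w, w ∈ ball (0 : H) 1 ∧ B w ∈ ball y δ := ⟨u, hu, hBy⟩
    obtain ⟨hw1, hw2⟩ := hcond.choose_spec
    set w := hcond.choose
    simp only [Set.mem_iUnion]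
    refine ⟨F y, ⟨y, hy, rfl⟩, ?_⟩
    have hFy : F y = A' w := by rw [hF]; simp only [dif_pos hcond]; rfl
    rw [mem_ball, dist_eq_norm, hFy]
    have hBuw : ‖B u - B w‖ < 2 * δ := by
      have h0 : ‖B u - B w‖ ≤ ‖B u - y‖ + ‖y - B w‖ := norm_sub_le_norm_sub_add_norm_sub _ _ _
      have h1 : ‖B u - y‖ < δ := by rw [← dist_eq_norm]; exact mem_ball.mp hBy
      have h2 : ‖y - B w‖ < δ := by rw [← dist_eq_norm, dist_comm]; exact mem_ball.mp hw2
      linarith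
    have huw : ‖u - w‖ ≤ 2 := by
      have h1 : ‖u‖ < 1 := mem_ball_zero_iff.mp hu
      have h2 : ‖w‖ < 1 := mem_ball_zero_iff.mp hw1
      calc ‖u - w‖ ≤ ‖u‖ + ‖w‖ := norm_sub_le _ _
        _ ≤ 2 := by linarith
    have hsq : ‖A' u - A' w‖ ^ 2 < ε ^ 2 := by
      calc ‖A' u - A' w‖ ^ 2 ≤ ‖u - w‖ * ‖B u - B w‖ := key u w
        _ ≤ 2 * ‖B u - B w‖ := mul_le_mul_of_nonneg_right huw (norm_nonneg _)
        _ < 2 * (2 * δ) := by linarith [hBuw, norm_nonneg (B u - B w)]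
        _ = ε ^ 2 / 2 := by rw [hδdef]; ring
        _ < ε ^ 2 := by nlinarith
    exact lt_of_pow_lt_pow_left₀ 2 hε.le hsq
  rw [isCompactOperator_iff_exists_mem_nhds_isCompact_closure_image]
  exact ⟨ball 0 1, ball_mem_nhds _ one_pos,
    tb.closure.isCompact_of_isClosed isClosed_closure⟩



/-- if the bilinear map `(b, f) ↦ T_b f : X** × H → H` satisfies
assumption (A1) with constants `0 < c ≤ C` (two-sided norm bounds and
compactness of `T_b` for `b` in the canonical image of `X`), then the modified
operator `T̃_b(f, g) := (T_b* g, T_b f)` on the Hilbert space direct sum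
`H × H` (realised as `WithLp 2 (H × H)`) satisfies (A1) with the same
constants and also satisfies (A2) (self-adjointness and the norm being the
supremum of `Re ⟨T̃_b u, u⟩` over the unit sphere).  Moreover, if `T` itself
also satisfies (A2), then `⟨T̃_b(f,g), (f,g)⟩ = 2 Re ⟨T_b f, g⟩` for all
`b ∈ X**` and `f, g ∈ H`, which for `b ∈ X` equals `⟨b, Q'_f g⟩`, where the
Gâteaux derivative `Q'_f g ∈ X*` of `Q` is determined by
`⟨a, Q'_f g⟩ = 2 Re ⟨T_a f, g⟩` for `a ∈ X`. -/
theorem stmt_2 {𝕜 X H : Type*} [RCLike 𝕜]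
    [NormedAddCommGroup X] [NormedSpace ℝ X] [CompleteSpace X]
    [TopologicalSpace.SeparableSpace (StrongDual ℝ X)]
    [NormedAddCommGroup H] [InnerProductSpace 𝕜 H] [CompleteSpace H]
    (T : StrongDual ℝ (StrongDual ℝ X) → (H →L[𝕜] H))
    (T_add : ∀ (b₁ b₂ : StrongDual ℝ (StrongDual ℝ X)) (ω : H), T (b₁ + b₂) ω = T b₁ ω + T b₂ ω)
    (T_smul : ∀ (r : ℝ) (b : StrongDual ℝ (StrongDual ℝ X)) (ω : H), T (r • b) ω = (r : 𝕜) • T b ω)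
    (c C : ℝ) (hc : 0 < c) (hcC : c ≤ C)
    (hlow : ∀ b : StrongDual ℝ (StrongDual ℝ X), c * ‖b‖ ≤ ‖T b‖)
    (hup : ∀ b : StrongDual ℝ (StrongDual ℝ X), ‖T b‖ ≤ C * ‖b‖)
    (hcomp : ∀ a : X, IsCompactOperator (T (inclusionInDoubleDual ℝ X a)))
    (Tt : StrongDual ℝ (StrongDual ℝ X) → (WithLp 2 (H × H) →L[𝕜] WithLp 2 (H × H)))
    (hTt : ∀ (b : StrongDual ℝ (StrongDual ℝ X)) (f g : H),
      Tt b ((WithLp.equiv 2 (H × H)).symm (f, g)) =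
        (WithLp.equiv 2 (H × H)).symm ((ContinuousLinearMap.adjoint (T b)) g, (T b) f)) :
    -- (A1) for `T̃` with the same constants
    ((∀ b : StrongDual ℝ (StrongDual ℝ X), c * ‖b‖ ≤ ‖Tt b‖) ∧
      (∀ b : StrongDual ℝ (StrongDual ℝ X), ‖Tt b‖ ≤ C * ‖b‖) ∧
      (∀ a : X, IsCompactOperator (Tt (inclusionInDoubleDual ℝ X a)))) ∧
    -- (A2) for `T̃`
    ((∀ b : StrongDual ℝ (StrongDual ℝ X), IsSelfAdjoint (Tt b)) ∧
      (∀ b : StrongDual ℝ (StrongDual ℝ X), ‖Tt b‖ = sSup {r : ℝ | ∃ u : WithLp 2 (H × H),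
        ‖u‖ = 1 ∧ RCLike.re (inner 𝕜 ((Tt b) u) u : 𝕜) = r})) ∧
    -- if `T` also satisfies (A2), the quadratic form of `T̃` is the Gâteaux derivative of `Q`
    (((∀ b : StrongDual ℝ (StrongDual ℝ X), IsSelfAdjoint (T b)) ∧
        (∀ b : StrongDual ℝ (StrongDual ℝ X),
          ‖T b‖ = sSup {r : ℝ | ∃ f : H, ‖f‖ = 1 ∧ RCLike.re (inner 𝕜 ((T b) f) f : 𝕜) = r})) →
      (∀ (b : StrongDual ℝ (StrongDual ℝ X)) (f g : H),
        RCLike.re (inner 𝕜 ((Tt b) ((WithLp.equiv 2 (H × H)).symm (f, g)))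
            ((WithLp.equiv 2 (H × H)).symm (f, g)) : 𝕜) =
          2 * RCLike.re (inner 𝕜 ((T b) f) g : 𝕜)) ∧
      (∀ Q' : H → H → StrongDual ℝ X,
        (∀ (a : X) (f g : H),
          Q' f g a = 2 * RCLike.re (inner 𝕜 ((T (inclusionInDoubleDual ℝ X a)) f) g : 𝕜)) →
        ∀ (a : X) (f g : H),
          RCLike.re (inner 𝕜 ((Tt (inclusionInDoubleDual ℝ X a))
              ((WithLp.equiv 2 (H × H)).symm (f, g)))
              ((WithLp.equiv 2 (H × H)).symm (f, g)) : 𝕜) = Q' f g a)) := by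
  -- componentwise description of `Tt`
  have hTt' : ∀ (b : StrongDual ℝ (StrongDual ℝ X)) (u : WithLp 2 (H × H)),
      Tt b u = (WithLp.equiv 2 (H × H)).symm
        (ContinuousLinearMap.adjoint (T b) u.snd, T b u.fst) := fun b u => hTt b u.fst u.snd
  -- norm of elements of `WithLp 2 (H × H)`
  have hnsq : ∀ (f g : H), ‖(WithLp.equiv 2 (H × H)).symm (f, g)‖ ^ 2 = ‖f‖ ^ 2 + ‖g‖ ^ 2 := by
    intro f g
    rw [WithLp.prod_norm_sq_eq_of_L2]
    simp
  -- `‖Tt b‖ = ‖T b‖`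
  have hnorm : ∀ b : StrongDual ℝ (StrongDual ℝ X), ‖Tt b‖ = ‖T b‖ := by
    intro b
    apply le_antisymm
    · apply ContinuousLinearMap.opNorm_le_bound _ (norm_nonneg (T b))
      intro u
      have h1 : ‖Tt b u‖ ^ 2 ≤ (‖T b‖ * ‖u‖) ^ 2 := by
        rw [hTt' b u, hnsq]
        have e1 : ‖ContinuousLinearMap.adjoint (T b) u.snd‖ ≤ ‖T b‖ * ‖u.snd‖ := by
          have := (ContinuousLinearMap.adjoint (T b)).le_opNorm u.snd
          rwa [LinearIsometryEquiv.norm_map ContinuousLinearMap.adjoint (T b)] at this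
        have e2 : ‖T b u.fst‖ ≤ ‖T b‖ * ‖u.fst‖ := (T b).le_opNorm u.fst
        have e3 : ‖u‖ ^ 2 = ‖u.fst‖ ^ 2 + ‖u.snd‖ ^ 2 := WithLp.prod_norm_sq_eq_of_L2 u
        have e1' : ‖ContinuousLinearMap.adjoint (T b) u.snd‖ ^ 2 ≤ (‖T b‖ * ‖u.snd‖) ^ 2 :=
          pow_le_pow_left₀ (norm_nonneg _) e1 2
        have e2' : ‖T b u.fst‖ ^ 2 ≤ (‖T b‖ * ‖u.fst‖) ^ 2 :=
          pow_le_pow_left₀ (norm_nonneg _) e2 2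
        calc ‖ContinuousLinearMap.adjoint (T b) u.snd‖ ^ 2 + ‖T b u.fst‖ ^ 2
            ≤ (‖T b‖ * ‖u.snd‖) ^ 2 + (‖T b‖ * ‖u.fst‖) ^ 2 := add_le_add e1' e2'
          _ = ‖T b‖ ^ 2 * (‖u.fst‖ ^ 2 + ‖u.snd‖ ^ 2) := by ring
          _ = ‖T b‖ ^ 2 * ‖u‖ ^ 2 := by rw [e3]
          _ = (‖T b‖ * ‖u‖) ^ 2 := by ring
      have h2 : (0:ℝ) ≤ ‖T b‖ * ‖u‖ := mul_nonneg (norm_nonneg _) (norm_nonneg _)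
      nlinarith [norm_nonneg (Tt b u)]
    · apply ContinuousLinearMap.opNorm_le_bound _ (norm_nonneg (Tt b))
      intro f
      have h0 : ‖(WithLp.equiv 2 (H × H)).symm (f, (0:H))‖ = ‖f‖ := by
        have := hnsq f 0
        simp only [norm_zero] at this
        nlinarith [norm_nonneg ((WithLp.equiv 2 (H × H)).symm (f, (0:H))), norm_nonneg f]
      have h1 : ‖T b f‖ ≤ ‖Tt b ((WithLp.equiv 2 (H × H)).symm (f, 0))‖ := by
        rw [hTt b f 0]
        have := hnsq (ContinuousLinearMap.adjoint (T b) 0) (T b f)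
        nlinarith [norm_nonneg ((WithLp.equiv 2 (H × H)).symm
            ((ContinuousLinearMap.adjoint (T b)) 0, T b f)),
          norm_nonneg (T b f), norm_nonneg (ContinuousLinearMap.adjoint (T b) (0:H))]
      calc ‖T b f‖ ≤ ‖Tt b ((WithLp.equiv 2 (H × H)).symm (f, 0))‖ := h1
        _ ≤ ‖Tt b‖ * ‖(WithLp.equiv 2 (H × H)).symm (f, (0:H))‖ := (Tt b).le_opNorm _
        _ = ‖Tt b‖ * ‖f‖ := by rw [h0]
  -- the quadratic form identity
  have hquad : ∀ (b : StrongDual ℝ (StrongDual ℝ X)) (f g : H),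
      RCLike.re (inner 𝕜 ((Tt b) ((WithLp.equiv 2 (H × H)).symm (f, g)))
        ((WithLp.equiv 2 (H × H)).symm (f, g)) : 𝕜) = 2 * RCLike.re (inner 𝕜 ((T b) f) g : 𝕜) := by
    intro b f g
    rw [hTt b f g, WithLp.prod_inner_apply]
    simp only [WithLp.equiv_symm_apply, WithLp.ofLp_toLp, map_add, RCLike.re_to_real]
    rw [ContinuousLinearMap.adjoint_inner_left]
    have : (inner 𝕜 g (T b f) : 𝕜) = starRingEnd 𝕜 (inner 𝕜 (T b f) g) := (inner_conj_symm _ _).symm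
    rw [this, RCLike.conj_re]
    ring
  -- self-adjointness of `Tt b`
  have hsa : ∀ b : StrongDual ℝ (StrongDual ℝ X), IsSelfAdjoint (Tt b) := by
    intro b
    rw [ContinuousLinearMap.isSelfAdjoint_iff_isSymmetric]
    intro x y
    show (inner 𝕜 (Tt b x) y : 𝕜) = inner 𝕜 x (Tt b y)
    rw [hTt' b x, hTt' b y, WithLp.prod_inner_apply, WithLp.prod_inner_apply]
    simp only [WithLp.equiv_symm_apply, WithLp.ofLp_toLp]
    rw [ContinuousLinearMap.adjoint_inner_left, ContinuousLinearMap.adjoint_inner_right]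
    exact add_comm _ _
  refine ⟨⟨fun b => (hlow b).trans (hnorm b).ge, fun b => (hnorm b).le.trans (hup b), ?_⟩,
    ⟨hsa, ?_⟩, fun _ => ⟨hquad, fun Q' hQ' a f g => by rw [hquad, hQ' a f g]⟩⟩
  · -- compactness
    intro a
    set A := T (inclusionInDoubleDual ℝ X a) with hA
    have hA' : IsCompactOperator (ContinuousLinearMap.adjoint A) :=
      adjoint_isCompactOperator' (hcomp a)
    have h1 : IsCompactOperator (fun p : H × H =>
        ((ContinuousLinearMap.adjoint A p.2, (0:H)) : H × H)) :=
      (hA'.clm_comp (ContinuousLinearMap.inl 𝕜 H H)).comp_clm (ContinuousLinearMap.snd 𝕜 H H)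
    have h2 : IsCompactOperator (fun p : H × H => (((0:H), A p.1) : H × H)) :=
      ((hcomp a).clm_comp (ContinuousLinearMap.inr 𝕜 H H)).comp_clm
        (ContinuousLinearMap.fst 𝕜 H H)
    have hP : IsCompactOperator (fun p : H × H =>
        ((ContinuousLinearMap.adjoint A p.2, A p.1) : H × H)) := by
      have := h1.add h2
      have heq' : ((fun p : H × H => ((ContinuousLinearMap.adjoint A p.2, (0:H)) : H × H)) +
          fun p : H × H => (((0:H), A p.1) : H × H)) =
          (fun p : H × H => ((ContinuousLinearMap.adjoint A p.2, A p.1) : H × H)) := by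
        funext p
        simp [Prod.ext_iff]
      rw [← heq']
      exact this
    have final := (hP.clm_comp
        ((WithLp.prodContinuousLinearEquiv 2 𝕜 H H).symm :
          (H × H) →L[𝕜] WithLp 2 (H × H))).comp_clm
        ((WithLp.prodContinuousLinearEquiv 2 𝕜 H H) :
          WithLp 2 (H × H) →L[𝕜] (H × H))
    have heq : ⇑(Tt (inclusionInDoubleDual ℝ X a)) =
        (⇑((WithLp.prodContinuousLinearEquiv 2 𝕜 H H).symm :
          (H × H) →L[𝕜] WithLp 2 (H × H)) ∘
          (fun p : H × H => ((ContinuousLinearMap.adjoint A p.2, A p.1) : H × H))) ∘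
          ⇑((WithLp.prodContinuousLinearEquiv 2 𝕜 H H) :
            WithLp 2 (H × H) →L[𝕜] (H × H)) := by
      funext u
      rw [hTt' (inclusionInDoubleDual ℝ X a) u]
      rfl
    rw [heq]
    exact final
  · -- the sSup formula
    intro b
    set S : Set ℝ := {r : ℝ | ∃ u : WithLp 2 (H × H),
      ‖u‖ = 1 ∧ RCLike.re (inner 𝕜 ((Tt b) u) u : 𝕜) = r} with hS
    have hbdd : BddAbove S := by
      refine ⟨‖Tt b‖, ?_⟩
      rintro r ⟨u, hu, rfl⟩
      calc RCLike.re (inner 𝕜 ((Tt b) u) u : 𝕜) ≤ ‖Tt b u‖ * ‖u‖ := re_inner_le_norm _ _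
        _ ≤ ‖Tt b‖ * ‖u‖ * ‖u‖ :=
            mul_le_mul_of_nonneg_right ((Tt b).le_opNorm u) (norm_nonneg u)
        _ = ‖Tt b‖ := by rw [hu]; ring
    rcases subsingleton_or_nontrivial H with hsub | hnt
    · -- trivial case
      have hsub2 : Subsingleton (WithLp 2 (H × H)) :=
        ⟨fun a b => (WithLp.equiv 2 (H × H)).injective (Subsingleton.elim _ _)⟩
      have hTt0 : Tt b = 0 := Subsingleton.elim _ _
      have hSe : S = ∅ := by
        rw [hS]
        ext r
        simp only [Set.mem_setOf_eq, Set.mem_empty_iff_false, iff_false, not_exists]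
        intro u ⟨hu, _⟩
        rw [Subsingleton.elim u (0 : WithLp 2 (H × H)), norm_zero] at hu
        exact one_ne_zero hu.symm
      rw [hTt0, hSe, Real.sSup_empty, norm_zero]
    · -- nontrivial case
      obtain ⟨x₀, hx₀⟩ := exists_ne (0 : H)
      have hx₀' : ‖x₀‖ ≠ 0 := norm_ne_zero_iff.mpr hx₀
      have hnormalize : ∀ v : H, v ≠ 0 → ‖((‖v‖⁻¹ : ℝ) : 𝕜) • v‖ = 1 := by
        intro v hv
        rw [norm_smul, RCLike.norm_ofReal, abs_inv, abs_norm]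
        field_simp [norm_ne_zero_iff.mpr hv]
      set f₀ : H := ((‖x₀‖⁻¹ : ℝ) : 𝕜) • x₀ with hf₀def
      have hf₀ : ‖f₀‖ = 1 := hnormalize x₀ hx₀
      have hub : ∀ r ∈ S, r ≤ ‖Tt b‖ := by
        rintro r ⟨u, hu, rfl⟩
        calc RCLike.re (inner 𝕜 ((Tt b) u) u : 𝕜) ≤ ‖Tt b u‖ * ‖u‖ := re_inner_le_norm _ _
          _ ≤ ‖Tt b‖ * ‖u‖ * ‖u‖ :=
              mul_le_mul_of_nonneg_right ((Tt b).le_opNorm u) (norm_nonneg u)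
          _ = ‖Tt b‖ := by rw [hu]; ring
      have hnorm1 : ∀ f g : H, ‖f‖ = 1 → ‖g‖ = 1 →
          ‖(WithLp.equiv 2 (H × H)).symm ((((Real.sqrt 2)⁻¹ : ℝ) : 𝕜) • f,
            (((Real.sqrt 2)⁻¹ : ℝ) : 𝕜) • g)‖ = 1 := by
        intro f g hf hg
        have h2 : (0:ℝ) < Real.sqrt 2 := Real.sqrt_pos.mpr (by norm_num)
        have hsq : ‖(WithLp.equiv 2 (H × H)).symm ((((Real.sqrt 2)⁻¹ : ℝ) : 𝕜) • f,
            (((Real.sqrt 2)⁻¹ : ℝ) : 𝕜) • g)‖ ^ 2 = 1 := by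
          rw [hnsq, norm_smul, norm_smul, hf, hg, RCLike.norm_ofReal, abs_inv,
            abs_of_pos h2]
          have h22 : Real.sqrt 2 ^ 2 = 2 := Real.sq_sqrt (by norm_num)
          field_simp
          linarith
        nlinarith [norm_nonneg ((WithLp.equiv 2 (H × H)).symm
          ((((Real.sqrt 2)⁻¹ : ℝ) : 𝕜) • f, (((Real.sqrt 2)⁻¹ : ℝ) : 𝕜) • g))]
      have hmem : ∀ f g : H, ‖f‖ = 1 → ‖g‖ = 1 →
          RCLike.re (inner 𝕜 ((T b) f) g : 𝕜) ∈ S := by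
        intro f g hf hg
        refine ⟨(WithLp.equiv 2 (H × H)).symm ((((Real.sqrt 2)⁻¹ : ℝ) : 𝕜) • f,
          (((Real.sqrt 2)⁻¹ : ℝ) : 𝕜) • g), hnorm1 f g hf hg, ?_⟩
        rw [hquad]
        have hin : (inner 𝕜 ((T b) ((((Real.sqrt 2)⁻¹ : ℝ) : 𝕜) • f))
            ((((Real.sqrt 2)⁻¹ : ℝ) : 𝕜) • g) : 𝕜) =
            (((2:ℝ)⁻¹ : ℝ) : 𝕜) * inner 𝕜 ((T b) f) g := by
          rw [map_smul, inner_smul_left, inner_smul_right, RCLike.conj_ofReal, ← mul_assoc,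
            ← RCLike.ofReal_mul]
          congr 2
          rw [← Real.mul_self_sqrt (by norm_num : (0:ℝ) ≤ 2)]
          field_simp
          rw [Real.sqrt_sq (Real.sqrt_nonneg 2)]
        rw [hin, RCLike.re_ofReal_mul]
        ring
      have h0mem : (0:ℝ) ∈ S := by
        refine ⟨(WithLp.equiv 2 (H × H)).symm (f₀, 0), ?_, ?_⟩
        · have := hnsq f₀ 0
          simp only [norm_zero] at this
          nlinarith [norm_nonneg ((WithLp.equiv 2 (H × H)).symm (f₀, (0:H)))]
        · rw [hquad]
          simp
      have hSne : S.Nonempty := ⟨0, h0mem⟩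
      have hle1 : sSup S ≤ ‖Tt b‖ := csSup_le hSne hub
      have hge0 : (0:ℝ) ≤ sSup S := le_csSup hbdd h0mem
      have hle2 : ‖T b‖ ≤ sSup S := by
        apply ContinuousLinearMap.opNorm_le_bound _ hge0
        intro x
        by_cases hx : x = 0
        · simp [hx]
        · have hxn : ‖x‖ ≠ 0 := norm_ne_zero_iff.mpr hx
          set f : H := ((‖x‖⁻¹ : ℝ) : 𝕜) • x with hfdef
          have hfn : ‖f‖ = 1 := hnormalize x hx
          have hxf : ((‖x‖ : ℝ) : 𝕜) • f = x := by
            rw [hfdef, smul_smul, ← RCLike.ofReal_mul, mul_inv_cancel₀ hxn]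
            simp
          have hTx : (T b) x = ((‖x‖ : ℝ) : 𝕜) • (T b) f := by
            conv_lhs => rw [← hxf]
            exact map_smul _ _ _
          have hnormTx : ‖(T b) x‖ = ‖x‖ * ‖(T b) f‖ := by
            rw [hTx, norm_smul, RCLike.norm_ofReal, abs_norm]
          have hAf : ‖(T b) f‖ ≤ sSup S := by
            by_cases hA0 : (T b) f = 0
            · rw [hA0, norm_zero]; exact hge0
            · have hAn : ‖(T b) f‖ ≠ 0 := norm_ne_zero_iff.mpr hA0
              set g : H := ((‖(T b) f‖⁻¹ : ℝ) : 𝕜) • (T b) f with hgdef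
              have hgn : ‖g‖ = 1 := hnormalize _ hA0
              have hval : RCLike.re (inner 𝕜 ((T b) f) g : 𝕜) = ‖(T b) f‖ := by
                rw [hgdef, inner_smul_right, RCLike.re_ofReal_mul, inner_self_eq_norm_sq]
                field_simp
              have := le_csSup hbdd (hmem f g hfn hgn)
              rwa [hval] at this
          calc ‖(T b) x‖ = ‖x‖ * ‖(T b) f‖ := hnormTx
            _ ≤ ‖x‖ * sSup S := mul_le_mul_of_nonneg_left hAf (norm_nonneg x)
            _ = sSup S * ‖x‖ := mul_comm _ _
      exact le_antisymm ((hnorm b).le.trans hle2) hle1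
end
end

section
/- Under the stated setting, if f ∈ X* and there exists γ ∈ H with Qγ = f, then there exists a minimum norm solution: an element ω ∈ H with Qω = f such that ‖ω‖_H ≤ ‖γ'‖_H for every γ' ∈ H with Qγ' = f. -/
open NormedSpace Filter Topology

noncomputable section

/-- The setting of Coifman–Lions–Meyer–Semmes-type quadratic operators:
`X` is a real Banach space, `H` a Hilbert space over `𝕜 ∈ {ℝ, ℂ}`,
`T` is a bilinear map `X** × H → H` satisfying assumption (A1)
(two-sided norm bounds and compactness of `T_b` for `b` in the canonical
image of `X`) and assumption (A2) (`T_b` self-adjoint with norm equal to the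
supremum of `⟨T_b f, f⟩` over the unit sphere), together with the quadratic
map `Q : H → X*` determined by `⟨a, Qω⟩ = ⟨T_a ω, ω⟩` for `a ∈ X`, and its
Gâteaux derivative `Q'` determined by `⟨a, Q'_ω γ⟩ = 2 Re ⟨T_a ω, γ⟩`. -/
structure CLMS (𝕜 X H : Type*) [RCLike 𝕜]
    [NormedAddCommGroup X] [NormedSpace ℝ X] [CompleteSpace X]
    [NormedAddCommGroup H] [InnerProductSpace 𝕜 H] [CompleteSpace H] where
  T : StrongDual ℝ (StrongDual ℝ X) → (H →L[𝕜] H)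
  T_add : ∀ (b₁ b₂ : StrongDual ℝ (StrongDual ℝ X)) (ω : H), T (b₁ + b₂) ω = T b₁ ω + T b₂ ω
  T_smul : ∀ (r : ℝ) (b : StrongDual ℝ (StrongDual ℝ X)) (ω : H), T (r • b) ω = (r : 𝕜) • T b ω
  c : ℝ
  C : ℝ
  c_pos : 0 < c
  c_le_C : c ≤ C
  lower : ∀ b : StrongDual ℝ (StrongDual ℝ X), c * ‖b‖ ≤ ‖T b‖
  upper : ∀ b : StrongDual ℝ (StrongDual ℝ X), ‖T b‖ ≤ C * ‖b‖
  compact : ∀ a : X, IsCompactOperator (T (inclusionInDoubleDual ℝ X a))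
  selfAdj : ∀ b : StrongDual ℝ (StrongDual ℝ X), IsSelfAdjoint (T b)
  norm_eq : ∀ b : StrongDual ℝ (StrongDual ℝ X),
    ‖T b‖ = sSup {r : ℝ | ∃ f : H, ‖f‖ = 1 ∧ RCLike.re (inner 𝕜 ((T b) f) f : 𝕜) = r}
  Q : H → StrongDual ℝ X
  hQ : ∀ (a : X) (ω : H),
    Q ω a = RCLike.re (inner 𝕜 ((T (inclusionInDoubleDual ℝ X a)) ω) ω : 𝕜)
  Q' : H → H → StrongDual ℝ X
  hQ' : ∀ (a : X) (ω γ : H),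
    Q' ω γ a = 2 * RCLike.re (inner 𝕜 ((T (inclusionInDoubleDual ℝ X a)) ω) γ : 𝕜)

namespace CLMS

variable {𝕜 X H : Type*} [RCLike 𝕜]
    [NormedAddCommGroup X] [NormedSpace ℝ X] [CompleteSpace X]
    [NormedAddCommGroup H] [InnerProductSpace 𝕜 H] [CompleteSpace H]

/-- The equivalent norm `‖b‖_{X_Q} := ‖T_b‖` on `X`. -/
def normQ (S : CLMS 𝕜 X H) (b : X) : ℝ := ‖S.T (inclusionInDoubleDual ℝ X b)‖

/-- The dual norm `‖f‖_{X_Q*} := sup {⟨b, f⟩ : b ∈ X, ‖b‖_{X_Q} ≤ 1}` on `X*`. -/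
def dualNormQ (S : CLMS 𝕜 X H) (f : StrongDual ℝ X) : ℝ :=
  sSup {r : ℝ | ∃ b : X, S.normQ b ≤ 1 ∧ f b = r}

/-- The set `𝒜 = {ω ∈ H : ‖ω‖ = 1, ‖Qω‖_{X_Q*} = 1}`. -/
def A (S : CLMS 𝕜 X H) : Set H := {ω : H | ‖ω‖ = 1 ∧ S.dualNormQ (S.Q ω) = 1}

/-- The duality mapping `D(b) = {h ∈ X* : ‖h‖_{X_Q*} = 1, ⟨b, h⟩ = 1}`. -/
def D (S : CLMS 𝕜 X H) (b : X) : Set (StrongDual ℝ X) :=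
  {h : StrongDual ℝ X | S.dualNormQ h = 1 ∧ h b = 1}

/-- `ω` is a minimum norm solution (of `Qγ = Qω`). -/
def MinNormSol (S : CLMS 𝕜 X H) (ω : H) : Prop :=
  ∀ γ : H, S.Q γ = S.Q ω → ‖ω‖ ≤ ‖γ‖

/-- Assumption (Sym): if `ω, γ ∈ 𝒜` have `Qω = Qγ`, then `Q'_ω (c γ) ≠ 0`
for some unimodular `c ∈ 𝕜`. -/
def Sym (S : CLMS 𝕜 X H) : Prop :=
  ∀ ω ∈ S.A, ∀ γ ∈ S.A, S.Q ω = S.Q γ → ∃ c : 𝕜, ‖c‖ = 1 ∧ S.Q' ω (c • γ) ≠ 0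

/-- Assumption (A3): the canonical pairing of `b ∈ X**` with `Qω ∈ X*`
equals `⟨T_b ω, ω⟩`. -/
def A3 (S : CLMS 𝕜 X H) : Prop :=
  ∀ (b : StrongDual ℝ (StrongDual ℝ X)) (ω : H), b (S.Q ω) = RCLike.re (inner 𝕜 ((S.T b) ω) ω : 𝕜)

end CLMS

/-- if `Qγ = f` is solvable then it has a minimum norm solution. -/
theorem stmt_3 {𝕜 X H : Type*} [RCLike 𝕜]
    [NormedAddCommGroup X] [NormedSpace ℝ X] [CompleteSpace X]
    [TopologicalSpace.SeparableSpace (StrongDual ℝ X)]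
    [NormedAddCommGroup H] [InnerProductSpace 𝕜 H] [CompleteSpace H]
    (S : CLMS 𝕜 X H) (f : StrongDual ℝ X) (γ : H) (hγ : S.Q γ = f) :
    ∃ ω : H, S.Q ω = f ∧ ∀ γ' : H, S.Q γ' = f → ‖ω‖ ≤ ‖γ'‖ := by

  classical
  set Sol : Set H := {γ' : H | S.Q γ' = f} with hSol
  have hγS : γ ∈ Sol := hγ
  set s : Set ℝ := norm '' Sol with hs
  have hsne : s.Nonempty := ⟨‖γ‖, γ, hγS, rfl⟩
  have hsbdd : BddBelow s := ⟨0, by rintro r ⟨x, -, rfl⟩; exact norm_nonneg x⟩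
  set m : ℝ := sInf s with hm
  have hm0 : 0 ≤ m := le_csInf hsne (by rintro r ⟨x, -, rfl⟩; exact norm_nonneg x)
  have hseq : ∀ n : ℕ, ∃ g : H, g ∈ Sol ∧ ‖g‖ < m + 1 / (n + 1) := by
    intro n
    obtain ⟨r, ⟨x, hx, rfl⟩, hr⟩ := Real.lt_sInf_add_pos hsne
      (by positivity : (0:ℝ) < 1 / (n + 1))
    exact ⟨x, hx, hr⟩
  choose g hgS hgn using hseq
  have hgb : ∀ n, ‖g n‖ ≤ m + 1 := fun n =>
    (hgn n).le.trans (by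
      have : (1:ℝ) / (n + 1) ≤ 1 := by
        rw [div_le_one (by positivity)]; linarith [Nat.cast_nonneg (α := ℝ) n]
      linarith)
  set u : Ultrafilter ℕ := Ultrafilter.of atTop with hu
  have hule : (u : Filter ℕ) ≤ atTop := Ultrafilter.of_le _
  set J : H → WeakDual 𝕜 H := fun x =>
    StrongDual.toWeakDual (InnerProductSpace.toDual 𝕜 H x) with hJ
  have hKw : IsCompact (WeakDual.toStrongDual ⁻¹' Metric.closedBall (0 : StrongDual 𝕜 H) (m + 1)) :=
    WeakDual.isCompact_closedBall (0 : StrongDual 𝕜 H) (m + 1)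
  have hmem : ∀ (t : ℝ), (∀ n, ‖g n‖ ≤ t) →
      ∀ n, J (g n) ∈ WeakDual.toStrongDual ⁻¹' Metric.closedBall (0 : StrongDual 𝕜 H) t := by
    intro t ht n
    simp only [Set.mem_preimage, Metric.mem_closedBall, dist_zero_right]
    show ‖(InnerProductSpace.toDual 𝕜 H) (g n)‖ ≤ t
    rw [LinearIsometryEquiv.norm_map]
    exact ht n
  obtain ⟨φ, -, hφ⟩ := hKw.ultrafilter_le_nhds (u.map (fun n => J (g n)))
    (by
      rw [Ultrafilter.coe_map]
      exact Filter.le_principal_iff.mpr (Filter.mem_map.mpr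
        (Filter.univ_mem' fun n => hmem _ hgb n)))
  have hφt : Tendsto (fun n => J (g n)) u (𝓝 φ) := by
    rwa [Filter.Tendsto, ← Ultrafilter.coe_map]
  set ω : H := (InnerProductSpace.toDual 𝕜 H).symm (WeakDual.toStrongDual φ) with hω
  have hweak : ∀ y : H, Tendsto (fun n => (inner 𝕜 (g n) y : 𝕜)) u (𝓝 (inner 𝕜 ω y : 𝕜)) := by
    intro y
    have hc : Continuous fun ψ : WeakDual 𝕜 H => ψ y := WeakDual.eval_continuous y
    have := (hc.tendsto φ).comp hφt
    have h1 : ∀ n, J (g n) y = (inner 𝕜 (g n) y : 𝕜) := fun n =>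
      InnerProductSpace.toDual_apply_apply
    have h2 : φ y = (inner 𝕜 ω y : 𝕜) := by
      rw [hω, InnerProductSpace.toDual_symm_apply]; rfl
    simpa [Function.comp_def, h1, h2] using this
  have hωm : ‖ω‖ ≤ m := by
    refine le_of_forall_pos_le_add fun ε hε => ?_
    have hclosed : IsClosed (WeakDual.toStrongDual ⁻¹'
        Metric.closedBall (0 : StrongDual 𝕜 H) (m + ε)) :=
      WeakDual.isClosed_closedBall (0 : StrongDual 𝕜 H) (m + ε)
    have hev : ∀ᶠ n in (u : Filter ℕ), J (g n) ∈ WeakDual.toStrongDual ⁻¹'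
        Metric.closedBall (0 : StrongDual 𝕜 H) (m + ε) := by
      have hev' : ∀ᶠ n : ℕ in atTop, (1:ℝ) / (n + 1) ≤ ε :=
        tendsto_one_div_add_atTop_nhds_zero_nat.eventually_le_const hε
      refine (hev'.filter_mono hule).mono fun n hn => ?_
      simp only [Set.mem_preimage, Metric.mem_closedBall, dist_zero_right]
      show ‖(InnerProductSpace.toDual 𝕜 H) (g n)‖ ≤ m + ε
      rw [LinearIsometryEquiv.norm_map]
      exact (hgn n).le.trans (by linarith)
    have hφmem := hclosed.mem_of_tendsto hφt hev
    simp only [Set.mem_preimage, Metric.mem_closedBall, dist_zero_right] at hφmem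
    calc ‖ω‖ = ‖WeakDual.toStrongDual φ‖ := by rw [hω, LinearIsometryEquiv.norm_map]
    _ ≤ m + ε := hφmem
  have hQω : S.Q ω = f := by
    refine ContinuousLinearMap.ext fun a => ?_
    set T : H →L[𝕜] H := S.T (inclusionInDoubleDual ℝ X a) with hT
    have hTc : IsCompactOperator T := S.compact a
    have hsym : ∀ x y : H, (inner 𝕜 (T x) y : 𝕜) = inner 𝕜 x (T y) := fun x y =>
      ((S.selfAdj (inclusionInDoubleDual ℝ X a)).isSymmetric).apply_clm x y
    have hKc : IsCompact (closure (T '' Metric.closedBall (0:H) (m + 1))) :=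
      hTc.isCompact_closure_image_closedBall (m + 1)
    obtain ⟨z, -, hz⟩ := hKc.ultrafilter_le_nhds (u.map (fun n => T (g n)))
      (by
        rw [Ultrafilter.coe_map]
        refine Filter.le_principal_iff.mpr (Filter.mem_map.mpr (Filter.univ_mem' fun n => ?_))
        exact subset_closure ⟨g n, Metric.mem_closedBall.mpr (by simpa using hgb n), rfl⟩)
    have hzt : Tendsto (fun n => T (g n)) u (𝓝 z) := by
      rwa [Filter.Tendsto, ← Ultrafilter.coe_map]
    have hzTω : z = T ω := by
      refine ext_inner_right 𝕜 fun v => ?_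
      have h1 : Tendsto (fun n => (inner 𝕜 (T (g n)) v : 𝕜)) u (𝓝 (inner 𝕜 z v : 𝕜)) :=
        hzt.inner tendsto_const_nhds
      have h2 : Tendsto (fun n => (inner 𝕜 (T (g n)) v : 𝕜)) u (𝓝 (inner 𝕜 (T ω) v : 𝕜)) := by
        have := hweak (T v)
        simp_rw [hsym]
        simpa [← hsym] using this
      exact tendsto_nhds_unique h1 h2
    have hquad : Tendsto (fun n => (inner 𝕜 (T (g n)) (g n) : 𝕜)) u
        (𝓝 (inner 𝕜 (T ω) ω : 𝕜)) := by
      have ht1 : Tendsto (fun n => (inner 𝕜 (T (g n) - T ω) (g n) : 𝕜)) u (𝓝 0) := by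
        refine squeeze_zero_norm (a := fun n => ‖T (g n) - T ω‖ * (m + 1)) (fun n => ?_) ?_
        · calc ‖(inner 𝕜 (T (g n) - T ω) (g n) : 𝕜)‖ ≤ ‖T (g n) - T ω‖ * ‖g n‖ :=
                norm_inner_le_norm _ _
          _ ≤ ‖T (g n) - T ω‖ * (m + 1) := by
                exact mul_le_mul_of_nonneg_left (hgb n) (norm_nonneg _)
        · have : Tendsto (fun n => T (g n) - T ω) u (𝓝 0) := by
            simpa [hzTω] using hzt.sub_const (T ω)
          simpa using (this.norm.mul_const (m + 1))
      have ht2 : Tendsto (fun n => (inner 𝕜 (T ω) (g n) : 𝕜)) u (𝓝 (inner 𝕜 (T ω) ω : 𝕜)) := by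
        have := (hweak (T ω)).star
        simpa only [RCLike.star_def, inner_conj_symm] using this
      have := ht1.add ht2
      simp only [inner_sub_left, zero_add] at this
      simpa using this
    have hre : Tendsto (fun n => RCLike.re (inner 𝕜 (T (g n)) (g n) : 𝕜)) u
        (𝓝 (RCLike.re (inner 𝕜 (T ω) ω : 𝕜))) :=
      (RCLike.continuous_re.tendsto _).comp hquad
    have hconst : ∀ n, RCLike.re (inner 𝕜 (T (g n)) (g n) : 𝕜) = f a := fun n => by
      rw [hT, ← S.hQ a (g n), hgS n]
    simp only [hconst] at hre
    have hfa := tendsto_nhds_unique hre tendsto_const_nhds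
    rw [S.hQ a ω]; exact hfa
  exact ⟨ω, hQω, fun γ' hγ' => hωm.trans (csInf_le hsbdd ⟨γ', hγ', rfl⟩)⟩
end
end

section
/- Under the stated setting, suppose that (a) for every f ∈ X* there exists a sequence (γ_j) in H such that ⟨a, Qγ_j⟩ → ⟨a, f⟩ for every a ∈ X (i.e. the range of Q is weak*-sequentially dense in X*), and (b) there is a constant K > 0 such that every minimum norm solution ω satisfies ‖ω‖_H² ≤ K·‖Qω‖_{X_Q*}. Then Q maps H onto X*. -/
open NormedSpace Filter Topology

noncomputable section

section Aux
open Filter Topology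
variable {𝕜 X H : Type*} [RCLike 𝕜]
    [NormedAddCommGroup X] [NormedSpace ℝ X] [CompleteSpace X]
    [NormedAddCommGroup H] [InnerProductSpace 𝕜 H] [CompleteSpace H]


variable {𝕜 H : Type*} [RCLike 𝕜] [NormedAddCommGroup H]
    [InnerProductSpace 𝕜 H] [CompleteSpace H]

lemma weak_seq_compact (x : ℕ → H) (M : ℝ) (hb : ∀ n, ‖x n‖ ≤ M) :
    ∃ (z : H) (φ : ℕ → ℕ), StrictMono φ ∧
      ∀ v : H, Tendsto (fun k => (inner 𝕜 (x (φ k)) v : 𝕜)) atTop (𝓝 (inner 𝕜 z v)) := by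
  have hM0 : 0 ≤ M := le_trans (norm_nonneg _) (hb 0)
  -- bounded inner 𝕜 products land in a compact ball
  have hball : ∀ k m, (inner 𝕜 (x k) (x m) : 𝕜) ∈ Metric.closedBall (0 : 𝕜) (M * M) := by
    intro k m
    rw [Metric.mem_closedBall, dist_zero_right]
    exact le_trans (norm_inner_le_norm _ _) (mul_le_mul (hb k) (hb m) (norm_nonneg _) hM0)
  haveI : CompactSpace (Metric.closedBall (0 : 𝕜) (M * M)) :=
    isCompact_iff_compactSpace.mp (isCompact_closedBall _ _)
  set y : ℕ → (ℕ → Metric.closedBall (0 : 𝕜) (M * M)) :=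
    fun k m => ⟨inner 𝕜 (x k) (x m), hball k m⟩ with hy
  obtain ⟨a, φ, hφ, ha⟩ := CompactSpace.tendsto_subseq y
  have hpt : ∀ m, Tendsto (fun k => (inner 𝕜 (x (φ k)) (x m) : 𝕜)) atTop (𝓝 ((a m : 𝕜))) := by
    intro m
    have h1 : Tendsto (fun k => (y (φ k)) m) atTop (𝓝 (a m)) := (tendsto_pi_nhds.mp ha) m
    exact (continuous_subtype_val.tendsto _).comp h1
  -- convergence on the span
  have hspan : ∀ v ∈ Submodule.span 𝕜 (Set.range x),
      ∃ l : 𝕜, Tendsto (fun k => (inner 𝕜 (x (φ k)) v : 𝕜)) atTop (𝓝 l) := by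
    intro v hv
    induction hv using Submodule.span_induction with
    | mem v hv =>
      obtain ⟨m, rfl⟩ := hv
      exact ⟨_, hpt m⟩
    | zero => exact ⟨0, by simp [inner_zero_right, tendsto_const_nhds]⟩
    | add u w _ _ hu hw =>
      obtain ⟨lu, hu⟩ := hu; obtain ⟨lw, hw⟩ := hw
      exact ⟨lu + lw, by simpa [inner_add_right] using hu.add hw⟩
    | smul c u _ hu =>
      obtain ⟨lu, hu⟩ := hu
      exact ⟨c * lu, by simpa [inner_smul_right] using hu.const_mul c⟩
  -- Cauchy on the closure of the span
  set Msub := (Submodule.span 𝕜 (Set.range x)).topologicalClosure with hMsub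
  have hxmem : ∀ n, x n ∈ Msub :=
    fun n => Submodule.le_topologicalClosure _ (Submodule.subset_span ⟨n, rfl⟩)
  have hcl : ∀ v ∈ Msub, CauchySeq (fun k => (inner 𝕜 (x (φ k)) v : 𝕜)) := by
    intro v hv
    rw [Metric.cauchySeq_iff]
    intro ε hε
    have hδ : (0 : ℝ) < ε / (8 * (M + 1)) := by positivity
    have hv' : v ∈ closure ((Submodule.span 𝕜 (Set.range x) : Set H)) := hv
    obtain ⟨w, hw, hwv⟩ := Metric.mem_closure_iff.mp hv' _ hδ
    obtain ⟨l, hl⟩ := hspan w hw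
    have hcs : CauchySeq (fun k => (inner 𝕜 (x (φ k)) w : 𝕜)) := hl.cauchySeq
    obtain ⟨N, hN⟩ := Metric.cauchySeq_iff.mp hcs (ε / 2) (by positivity)
    refine ⟨N, fun m hm n hn => ?_⟩
    have key : ∀ k, ‖(inner 𝕜 (x (φ k)) v : 𝕜) - inner 𝕜 (x (φ k)) w‖ ≤ M * (ε / (8 * (M + 1))) := by
      intro k
      rw [← inner_sub_right]
      refine le_trans (norm_inner_le_norm _ _) ?_
      have h1 : ‖v - w‖ ≤ ε / (8 * (M + 1)) := by
        rw [← dist_eq_norm]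
        exact hwv.le
      exact mul_le_mul (hb _) h1 (norm_nonneg _) hM0
    have ht : (M + 1) * (ε / (8 * (M + 1))) = ε / 8 := by field_simp
    have hMd : M * (ε / (8 * (M + 1))) ≤ ε / 8 := by nlinarith [hδ.le]
    have d1 := hN m hm n hn
    calc dist (inner 𝕜 (x (φ m)) v : 𝕜) (inner 𝕜 (x (φ n)) v : 𝕜)
        ≤ dist (inner 𝕜 (x (φ m)) v : 𝕜) (inner 𝕜 (x (φ m)) w : 𝕜)
          + dist (inner 𝕜 (x (φ m)) w : 𝕜) (inner 𝕜 (x (φ n)) w : 𝕜)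
          + dist (inner 𝕜 (x (φ n)) w : 𝕜) (inner 𝕜 (x (φ n)) v : 𝕜) := dist_triangle4 _ _ _ _
      _ ≤ ε / 8 + ε / 2 + ε / 8 := by
          refine add_le_add (add_le_add ?_ (le_of_lt d1)) ?_
          · rw [dist_eq_norm]; exact (key m).trans hMd
          · rw [dist_eq_norm, norm_sub_rev]; exact (key n).trans hMd
      _ < ε := by linarith
  -- Cauchy everywhere, via orthogonal decomposition
  haveI : CompleteSpace Msub :=
    (Submodule.span 𝕜 (Set.range x)).isClosed_topologicalClosure.completeSpace_coe
  have hC : ∀ v : H, CauchySeq (fun k => (inner 𝕜 (x (φ k)) v : 𝕜)) := by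
    intro v
    obtain ⟨u, hu, w, hw, rfl⟩ := Msub.exists_add_mem_mem_orthogonal v
    have h0 : ∀ k, (inner 𝕜 (x (φ k)) (u + w) : 𝕜) = inner 𝕜 (x (φ k)) u := by
      intro k
      rw [inner_add_right, Submodule.inner_right_of_mem_orthogonal (hxmem (φ k)) hw, add_zero]
    simp only [h0]
    exact hcl u hu
  -- build the limit functional
  choose l hl using fun v => cauchySeq_tendsto_of_complete (hC v)
  have hbd : ∀ v, ‖l v‖ ≤ M * ‖v‖ := by
    intro v
    refine le_of_tendsto (hl v).norm (Eventually.of_forall fun k => ?_)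
    exact le_trans (norm_inner_le_norm _ _) (mul_le_mul_of_nonneg_right (hb _) (norm_nonneg _))
  let L : H →L[𝕜] 𝕜 := LinearMap.mkContinuous
    { toFun := l
      map_add' := fun u v => tendsto_nhds_unique (hl (u + v))
        (by simpa [inner_add_right] using (hl u).add (hl v))
      map_smul' := fun c v => tendsto_nhds_unique (hl (c • v))
        (by simpa [inner_smul_right] using (hl v).const_mul c) } M hbd
  refine ⟨(InnerProductSpace.toDual 𝕜 H).symm L, φ, hφ, fun v => ?_⟩
  rw [InnerProductSpace.toDual_symm_apply]
  exact hl v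

lemma compact_weak_strong (T : H →L[𝕜] H) (hT : IsCompactOperator T)
    (x : ℕ → H) (z : H) (M : ℝ) (hb : ∀ n, ‖x n‖ ≤ M)
    (hw : ∀ v : H, Tendsto (fun k => (inner 𝕜 (x k) v : 𝕜)) atTop (𝓝 (inner 𝕜 z v))) :
    Tendsto (fun k => T (x k)) atTop (𝓝 (T z)) := by
  obtain ⟨K, hKc, hK⟩ :=
    IsCompactOperator.image_closedBall_subset_compact (f := (T : H →ₗ[𝕜] H)) hT (M + 1)
  apply tendsto_of_subseq_tendsto
  intro ns hns
  have hmem : ∀ k, T (x (ns k)) ∈ K := by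
    intro k
    refine hK ⟨x (ns k), ?_, rfl⟩
    rw [Metric.mem_closedBall, dist_zero_right]
    linarith [hb (ns k)]
  obtain ⟨w, _, ms, hms, hlim⟩ := hKc.tendsto_subseq hmem
  refine ⟨ms, ?_⟩
  have hlim' : Tendsto (fun k => T (x (ns (ms k)))) atTop (𝓝 w) := hlim
  have hwz : w = T z := by
    refine ext_inner_right 𝕜 fun v => ?_
    have h1 : Tendsto (fun k => (inner 𝕜 (T (x (ns (ms k)))) v : 𝕜)) atTop (𝓝 (inner 𝕜 w v)) :=
      hlim'.inner tendsto_const_nhds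
    have h2 : Tendsto (fun k => (inner 𝕜 (T (x (ns (ms k)))) v : 𝕜)) atTop
        (𝓝 (inner 𝕜 (T z) v)) := by
      have h3 : Tendsto (fun k => (inner 𝕜 (x (ns (ms k))) ((ContinuousLinearMap.adjoint T) v) : 𝕜))
          atTop (𝓝 (inner 𝕜 z ((ContinuousLinearMap.adjoint T) v))) :=
        (hw _).comp (hns.comp hms.tendsto_atTop)
      simpa [ContinuousLinearMap.adjoint_inner_right] using h3
    exact tendsto_nhds_unique h1 h2
  rw [← hwz]; exact hlim'

lemma Q_weak (S : CLMS 𝕜 X H) (x : ℕ → H) (z : H) (M : ℝ) (hb : ∀ n, ‖x n‖ ≤ M)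
    (hw : ∀ v : H, Tendsto (fun k => (inner 𝕜 (x k) v : 𝕜)) atTop (𝓝 (inner 𝕜 z v)))
    (a : X) : Tendsto (fun k => S.Q (x k) a) atTop (𝓝 (S.Q z a)) := by
  set T := S.T (NormedSpace.inclusionInDoubleDual ℝ X a) with hT
  have hstr : Tendsto (fun k => T (x k)) atTop (𝓝 (T z)) :=
    compact_weak_strong T (S.compact a) x z M hb hw
  have h1 : Tendsto (fun k => (inner 𝕜 (T (x k)) (x k) : 𝕜)) atTop (𝓝 (inner 𝕜 (T z) z)) := by
    have hd : Tendsto (fun k => (inner 𝕜 (T (x k) - T z) (x k) : 𝕜)) atTop (𝓝 0) := by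
      have h5 : Tendsto (fun k => T (x k) - T z) atTop (𝓝 (T z - T z)) :=
        hstr.sub tendsto_const_nhds
      rw [sub_self] at h5
      have h6 : Tendsto (fun k => ‖T (x k) - T z‖ * M) atTop (𝓝 0) := by
        simpa using h5.norm.mul_const M
      refine squeeze_zero_norm (fun k => ?_) h6
      exact le_trans (norm_inner_le_norm _ _)
        (mul_le_mul_of_nonneg_left (hb k) (norm_nonneg _))
    have h2 : Tendsto (fun k => (inner 𝕜 (T z) (x k) : 𝕜)) atTop (𝓝 (inner 𝕜 (T z) z)) := by
      have h3 : Tendsto (fun k => (starRingEnd 𝕜) (inner 𝕜 (x k) (T z) : 𝕜)) atTop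
          (𝓝 ((starRingEnd 𝕜) (inner 𝕜 z (T z) : 𝕜))) :=
        ((RCLike.continuous_conj).tendsto _).comp (hw (T z))
      simpa [inner_conj_symm] using h3
    have h4 := hd.add h2
    rw [zero_add] at h4
    convert h4 using 2 with k
    rw [inner_sub_left]
    ring
  have h6 : Tendsto (fun k => RCLike.re (inner 𝕜 (T (x k)) (x k) : 𝕜)) atTop
      (𝓝 (RCLike.re (inner 𝕜 (T z) z : 𝕜))) :=
    ((RCLike.continuous_re).tendsto _).comp h1
  simpa [S.hQ, ← hT] using h6

lemma exists_minNorm (S : CLMS 𝕜 X H) (γ0 : H) :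
    ∃ ω : H, S.Q ω = S.Q γ0 ∧ S.MinNormSol ω := by
  set s : Set ℝ := {r : ℝ | ∃ γ : H, S.Q γ = S.Q γ0 ∧ ‖γ‖ = r} with hs
  have hne : s.Nonempty := ⟨‖γ0‖, γ0, rfl, rfl⟩
  have hbdd : BddBelow s := ⟨0, fun r ⟨γ, _, hγ⟩ => hγ ▸ norm_nonneg γ⟩
  set m := sInf s with hm
  have hm0 : 0 ≤ m := le_csInf hne fun r ⟨γ, _, hγ⟩ => hγ ▸ norm_nonneg γ
  have hsel : ∀ k : ℕ, ∃ γ : H, S.Q γ = S.Q γ0 ∧ ‖γ‖ < m + 1 / (k + 1) := by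
    intro k
    obtain ⟨r, ⟨γ, hγ1, hγ2⟩, hr⟩ := Real.lt_sInf_add_pos hne
      (by positivity : (0:ℝ) < 1 / (k + 1))
    exact ⟨γ, hγ1, hγ2 ▸ hr⟩
  choose x hx1 hx2 using hsel
  have hb : ∀ k, ‖x k‖ ≤ m + 1 := by
    intro k
    have h1 : (1 : ℝ) / (k + 1) ≤ 1 := by
      rw [div_le_one (by positivity)]
      linarith [Nat.cast_nonneg (α := ℝ) k]
    linarith [hx2 k]
  obtain ⟨z, φ, hφ, hw⟩ := weak_seq_compact (𝕜 := 𝕜) x (m + 1) hb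
  have hQz : S.Q z = S.Q γ0 := by
    refine ContinuousLinearMap.ext fun a => ?_
    have h1 : Tendsto (fun k => S.Q (x (φ k)) a) atTop (𝓝 (S.Q z a)) :=
      Q_weak S (fun k => x (φ k)) z (m + 1) (fun k => hb (φ k)) hw a
    have h2 : (fun k => S.Q (x (φ k)) a) = fun _ => S.Q γ0 a := by
      funext k; rw [hx1 (φ k)]
    rw [h2] at h1
    exact tendsto_nhds_unique h1 tendsto_const_nhds
  have hnz : ‖z‖ ≤ m := by
    rcases eq_or_ne z 0 with hz | hz
    · rw [hz, norm_zero]; exact hm0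
    · have hzpos : 0 < ‖z‖ := norm_pos_iff.mpr hz
      have key : ∀ ε : ℝ, 0 < ε → ‖z‖ ^ 2 ≤ (m + ε) * ‖z‖ := by
        intro ε hε
        have h1 : Tendsto (fun k => RCLike.re (inner 𝕜 (x (φ k)) z : 𝕜)) atTop
            (𝓝 (RCLike.re (inner 𝕜 z z : 𝕜))) :=
          ((RCLike.continuous_re).tendsto _).comp (hw z)
        rw [inner_self_eq_norm_sq] at h1
        refine le_of_tendsto h1 ?_
        have hev : ∀ᶠ k in atTop, (1 : ℝ) / (φ k + 1) ≤ ε := by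
          have : Tendsto (fun k => (1 : ℝ) / (φ k + 1)) atTop (𝓝 0) := by
            apply squeeze_zero (fun k => by positivity) (fun k => ?_)
              tendsto_one_div_add_atTop_nhds_zero_nat
            gcongr
            exact_mod_cast (hφ.le_apply)
          exact (this.eventually_le_const hε)
        filter_upwards [hev] with k hk
        calc RCLike.re (inner 𝕜 (x (φ k)) z : 𝕜) ≤ ‖(inner 𝕜 (x (φ k)) z : 𝕜)‖ :=
              RCLike.re_le_norm _
          _ ≤ ‖x (φ k)‖ * ‖z‖ := norm_inner_le_norm _ _
          _ ≤ (m + ε) * ‖z‖ := by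
              have := hx2 (φ k)
              have := hk
              gcongr
              linarith
      have h2 : ‖z‖ ≤ m := by
        by_contra hcon
        push_neg at hcon
        have hε : 0 < (‖z‖ - m) / 2 := by linarith
        have := key _ hε
        nlinarith
      exact h2
  refine ⟨z, hQz, fun γ hγ => ?_⟩
  have : ‖γ‖ ∈ s := ⟨γ, hγ.trans hQz, rfl⟩
  exact hnz.trans (csInf_le hbdd this)

lemma dualNormQ_le (S : CLMS 𝕜 X H) (f : StrongDual ℝ X) :
    S.dualNormQ f ≤ ‖f‖ / S.c := by
  have hc := S.c_pos
  apply Real.sSup_le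
  · rintro r ⟨b, hb1, rfl⟩
    have hnb : ‖NormedSpace.inclusionInDoubleDual ℝ X b‖ = ‖b‖ :=
      (NormedSpace.inclusionInDoubleDualLi (𝕜 := ℝ) (E := X)).norm_map b
    have h1 : S.c * ‖b‖ ≤ 1 := by
      have := S.lower (NormedSpace.inclusionInDoubleDual ℝ X b)
      rw [hnb] at this
      exact this.trans hb1
    have hbb : ‖b‖ ≤ 1 / S.c := by
      rw [le_div_iff₀ hc, mul_comm]
      exact h1
    calc f b ≤ ‖f b‖ := le_abs_self _
      _ ≤ ‖f‖ * ‖b‖ := f.le_opNorm b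
      _ ≤ ‖f‖ * (1 / S.c) := by gcongr
      _ = ‖f‖ / S.c := by ring
  · positivity

end Aux

/-- weak*-sequential density of the range of `Q` plus a uniform a
priori bound on minimum norm solutions imply surjectivity of `Q : H → X*`. -/
theorem stmt_4 {𝕜 X H : Type*} [RCLike 𝕜]
    [NormedAddCommGroup X] [NormedSpace ℝ X] [CompleteSpace X]
    [TopologicalSpace.SeparableSpace (StrongDual ℝ X)]
    [NormedAddCommGroup H] [InnerProductSpace 𝕜 H] [CompleteSpace H]
    (S : CLMS 𝕜 X H)
    (hdense : ∀ f : StrongDual ℝ X, ∃ γ : ℕ → H, ∀ a : X,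
      Tendsto (fun j => S.Q (γ j) a) atTop (𝓝 (f a)))
    (K : ℝ) (hK : 0 < K)
    (hbound : ∀ ω : H, S.MinNormSol ω → ‖ω‖ ^ 2 ≤ K * S.dualNormQ (S.Q ω)) :
    Function.Surjective S.Q := by
  intro f
  obtain ⟨γ, hγ⟩ := hdense f
  obtain ⟨M1, hM1⟩ : ∃ M1, ∀ j, ‖S.Q (γ j)‖ ≤ M1 := by
    apply banach_steinhaus
    intro a
    obtain ⟨C, hC⟩ := (hγ a).norm.bddAbove_range
    exact ⟨C, fun j => hC (Set.mem_range_self j)⟩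
  have hM1nn : 0 ≤ M1 := le_trans (norm_nonneg _) (hM1 0)
  choose ω hω1 hω2 using fun j => exists_minNorm S (γ j)
  set B := K * M1 / S.c with hB
  have hcpos := S.c_pos
  have hBnn : 0 ≤ B := by positivity
  have hsq : ∀ j, ‖ω j‖ ^ 2 ≤ B := by
    intro j
    have h1 := hbound (ω j) (hω2 j)
    have h2 : S.dualNormQ (S.Q (ω j)) ≤ ‖S.Q (γ j)‖ / S.c := by
      rw [hω1 j]
      exact dualNormQ_le S _
    have h3 : ‖S.Q (γ j)‖ / S.c ≤ M1 / S.c := by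
      have hcpos := S.c_pos
      gcongr
      exact hM1 j
    calc ‖ω j‖ ^ 2 ≤ K * S.dualNormQ (S.Q (ω j)) := h1
      _ ≤ K * (M1 / S.c) := by
          refine mul_le_mul_of_nonneg_left (h2.trans h3) hK.le
      _ = B := by rw [hB]; ring
  have hb : ∀ j, ‖ω j‖ ≤ max 1 B := by
    intro j
    rcases le_or_gt (‖ω j‖) 1 with h | h
    · exact h.trans (le_max_left _ _)
    · refine le_trans ?_ (le_max_right _ _)
      nlinarith [hsq j]
  obtain ⟨z, φ, hφ, hw⟩ := weak_seq_compact (𝕜 := 𝕜) ω (max 1 B) hb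
  refine ⟨z, ?_⟩
  refine ContinuousLinearMap.ext fun a => ?_
  have h1 : Tendsto (fun k => S.Q (ω (φ k)) a) atTop (𝓝 (S.Q z a)) :=
    Q_weak S (fun k => ω (φ k)) z (max 1 B) (fun k => hb (φ k)) hw a
  have h2 : Tendsto (fun k => S.Q (ω (φ k)) a) atTop (𝓝 (f a)) := by
    have h3 : (fun k => S.Q (ω (φ k)) a) = fun k => S.Q (γ (φ k)) a := by
      funext k; rw [hω1 (φ k)]
    rw [h3]
    exact (hγ a).comp hφ.tendsto_atTop
  exact tendsto_nhds_unique h1 h2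
end
end

section
/- Under the stated setting, for every b ∈ X with ‖T_b‖_{H→H} = 1 there exists ω ∈ 𝒜 such that ⟨b, Qω⟩ = 1 and T_b ω = ω; in particular, every b in the unit sphere of (X, ‖·‖_{X_Q}) attains its norm on Q(𝒜). -/
open NormedSpace Filter Topology

noncomputable section

open RCLike in
set_option linter.unusedSectionVars false in
private lemma aux_fixed {𝕜 H : Type*} [RCLike 𝕜] [NormedAddCommGroup H] [InnerProductSpace 𝕜 H] [CompleteSpace H] (T : H →L[𝕜] H) (hc : IsCompactOperator T)
    (hn : ‖T‖ = 1)
    (hs : sSup {r : ℝ | ∃ f : H, ‖f‖ = 1 ∧ re (inner 𝕜 (T f) f : 𝕜) = r} = 1) :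
    ∃ ω : H, ‖ω‖ = 1 ∧ T ω = ω := by
  -- a sequence on the sphere with Rayleigh quotient → 1
  have hbdd : BddAbove {r : ℝ | ∃ f : H, ‖f‖ = 1 ∧ re (inner 𝕜 (T f) f : 𝕜) = r} := by
    refine ⟨1, ?_⟩
    rintro r ⟨f, hf, rfl⟩
    calc re (inner 𝕜 (T f) f : 𝕜) ≤ ‖T f‖ * ‖f‖ := re_inner_le_norm _ _
      _ ≤ ‖T‖ * ‖f‖ * ‖f‖ := by gcongr; exact T.le_opNorm f
      _ = 1 := by rw [hn, hf]; ring
  have hseq : ∀ n : ℕ, ∃ f : H, ‖f‖ = 1 ∧ 1 - 1/(n+1) < re (inner 𝕜 (T f) f : 𝕜) := by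
    intro n
    have h1 : 1 - 1/((n:ℝ)+1) < sSup {r : ℝ | ∃ f : H, ‖f‖ = 1 ∧ re (inner 𝕜 (T f) f : 𝕜) = r} := by
      rw [hs]; have : (0:ℝ) < 1/((n:ℝ)+1) := by positivity
      linarith
    obtain ⟨r, ⟨f, hf, rfl⟩, hr⟩ := exists_lt_of_lt_csSup (by
      by_contra h
      rw [Set.not_nonempty_iff_eq_empty] at h
      rw [h, Real.sSup_empty] at hs; norm_num at hs) h1
    exact ⟨f, hf, hr⟩
  choose f hf1 hf2 using hseq
  -- ‖T fₙ - fₙ‖² ≤ 2/(n+1)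
  have key : ∀ n : ℕ, ‖T (f n) - f n‖^2 ≤ 2/((n:ℝ)+1) := by
    intro n
    have h1 : ‖T (f n) - f n‖^2 = ‖T (f n)‖^2 - 2 * re (inner 𝕜 (T (f n)) (f n) : 𝕜) + ‖f n‖^2 :=
      norm_sub_sq (𝕜 := 𝕜) _ _
    have h2 : ‖T (f n)‖ ≤ 1 := by
      calc ‖T (f n)‖ ≤ ‖T‖ * ‖f n‖ := T.le_opNorm _
        _ = 1 := by rw [hn, hf1]; ring
    have h3 := hf2 n
    have h4 : ‖T (f n)‖^2 ≤ 1 := by nlinarith [norm_nonneg (T (f n))]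
    have hh : 2/((n:ℝ)+1) = 2*(1/((n:ℝ)+1)) := by ring
    rw [h1, hf1]
    rw [hh]
    nlinarith
  have hdiff : Tendsto (fun n => T (f n) - f n) atTop (𝓝 0) := by
    rw [tendsto_iff_norm_sub_tendsto_zero]
    simp only [sub_zero]
    have hd : Tendsto (fun n : ℕ => 2/((n:ℝ)+1)) atTop (𝓝 0) := by
      have h2 := tendsto_one_div_add_atTop_nhds_zero_nat.const_mul (2:ℝ)
      simpa [div_eq_mul_inv] using h2
    have h0 : Tendsto (fun n : ℕ => Real.sqrt (2/((n:ℝ)+1))) atTop (𝓝 0) := by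
      have h := (Real.continuous_sqrt.tendsto 0).comp hd
      rw [Real.sqrt_zero] at h
      exact h
    refine squeeze_zero (fun n => norm_nonneg _) (fun n => ?_) h0
    have := key n
    have hnn : (0:ℝ) ≤ 2/((n:ℝ)+1) := by positivity
    nlinarith [norm_nonneg (T (f n) - f n), Real.sq_sqrt hnn, Real.sqrt_nonneg (2/((n:ℝ)+1))]
  -- compactness: subsequence of T fₙ converges
  obtain ⟨K, hK, hKsub⟩ := hc.image_closedBall_subset_compact (f := T.toLinearMap) 1
  have hmem : ∀ n, T (f n) ∈ K := fun n => hKsub ⟨f n, by simp [Metric.mem_closedBall, hf1], rfl⟩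
  obtain ⟨z, _, φ, hφ, hz⟩ := hK.tendsto_subseq hmem
  have hfz : Tendsto (fun n => f (φ n)) atTop (𝓝 z) := by
    have : Tendsto (fun n => T (f (φ n)) - (T (f (φ n)) - f (φ n))) atTop (𝓝 (z - 0)) :=
      hz.sub (hdiff.comp hφ.tendsto_atTop)
    simpa using this
  have hznorm : ‖z‖ = 1 := by
    have := (continuous_norm.tendsto z).comp hfz
    simp only [Function.comp_def] at this
    have h2 : Tendsto (fun n : ℕ => (1:ℝ)) atTop (𝓝 ‖z‖) := by
      convert this using 1; ext n; exact (hf1 (φ n)).symm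
    exact (tendsto_nhds_unique tendsto_const_nhds h2).symm
  have hTz : T z = z := by
    have h1 : Tendsto (fun n => T (f (φ n))) atTop (𝓝 (T z)) :=
      (T.continuous.tendsto z).comp hfz
    exact tendsto_nhds_unique h1 hz
  exact ⟨z, hznorm, hTz⟩


/-- every `b` in the unit sphere of `(X, ‖·‖_{X_Q})` is a Lagrange
multiplier: there is `ω ∈ 𝒜` with `⟨b, Qω⟩ = 1` and `T_b ω = ω`. -/
theorem stmt_6 {𝕜 X H : Type*} [RCLike 𝕜]
    [NormedAddCommGroup X] [NormedSpace ℝ X] [CompleteSpace X]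
    [TopologicalSpace.SeparableSpace (StrongDual ℝ X)]
    [NormedAddCommGroup H] [InnerProductSpace 𝕜 H] [CompleteSpace H]
    (S : CLMS 𝕜 X H) (b : X) (hb : S.normQ b = 1) :
    ∃ ω ∈ S.A, S.Q ω b = 1 ∧ S.T (inclusionInDoubleDual ℝ X b) ω = ω := by
  set Tb := S.T (inclusionInDoubleDual ℝ X b) with hTb
  have hn : ‖Tb‖ = 1 := hb
  have hsup : sSup {r : ℝ | ∃ f : H, ‖f‖ = 1 ∧ RCLike.re (inner 𝕜 (Tb f) f : 𝕜) = r} = 1 := by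
    rw [← S.norm_eq]; exact hb
  obtain ⟨ω, hω1, hωfix⟩ := aux_fixed Tb (S.compact b) hn hsup
  have hQb : S.Q ω b = 1 := by
    rw [S.hQ b ω, ← hTb, hωfix, inner_self_eq_norm_sq, hω1]; norm_num
  have hbound : ∀ r ∈ {r : ℝ | ∃ a : X, S.normQ a ≤ 1 ∧ S.Q ω a = r}, r ≤ 1 := by
    rintro r ⟨a, ha, rfl⟩
    rw [S.hQ a ω]
    calc RCLike.re (inner 𝕜 ((S.T (inclusionInDoubleDual ℝ X a)) ω) ω : 𝕜)
        ≤ ‖(S.T (inclusionInDoubleDual ℝ X a)) ω‖ * ‖ω‖ := re_inner_le_norm _ _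
      _ ≤ ‖S.T (inclusionInDoubleDual ℝ X a)‖ * ‖ω‖ * ‖ω‖ := by
          gcongr; exact (S.T _).le_opNorm ω
      _ ≤ 1 := by rw [hω1]; simpa [CLMS.normQ] using ha
  have hmem : (1:ℝ) ∈ {r : ℝ | ∃ a : X, S.normQ a ≤ 1 ∧ S.Q ω a = r} := ⟨b, hb.le, hQb⟩
  have hdn : S.dualNormQ (S.Q ω) = 1 := by
    refine le_antisymm (csSup_le ⟨1, hmem⟩ hbound) (le_csSup ⟨1, hbound⟩ hmem)
  exact ⟨ω, ⟨hω1, hdn⟩, hQb, hωfix⟩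
end
end

section
/- Under the stated setting together with Assumption (Sym), suppose f ∈ X* is an extreme point of the closed unit ball {g ∈ X* : ‖g‖_{X_Q*} ≤ 1}, and suppose ω, γ ∈ 𝒜 satisfy Qω = Qγ = f. Then there exists c ∈ 𝕂 with |c| = 1 such that γ = c·ω; that is, the minimum norm solution of Qω = f is unique up to multiplication by a unimodular scalar. -/
open NormedSpace Filter Topology

noncomputable section

namespace CLMS

section Aux

variable {𝕜 X H : Type*} [RCLike 𝕜]
    [NormedAddCommGroup X] [NormedSpace ℝ X] [CompleteSpace X]
    [NormedAddCommGroup H] [InnerProductSpace 𝕜 H] [CompleteSpace H]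
    (S : CLMS 𝕜 X H)

lemma adj (b : StrongDual ℝ (StrongDual ℝ X)) : ContinuousLinearMap.adjoint (S.T b) = S.T b :=
  ContinuousLinearMap.isSelfAdjoint_iff'.mp (S.selfAdj b)

lemma re_symm (b : StrongDual ℝ (StrongDual ℝ X)) (x y : H) :
    RCLike.re (inner 𝕜 (S.T b y) x : 𝕜) = RCLike.re (inner 𝕜 (S.T b x) y : 𝕜) := by
  have h : (inner 𝕜 (S.T b y) x : 𝕜) = inner 𝕜 y (S.T b x) := by
    conv_lhs => rw [← S.adj b]
    exact ContinuousLinearMap.adjoint_inner_left _ _ _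
  rw [h, ← inner_conj_symm, RCLike.conj_re]

lemma Q_add (x y : H) (a : X) :
    S.Q (x + y) a = S.Q x a + S.Q' x y a + S.Q y a := by
  rw [S.hQ, S.hQ, S.hQ', S.hQ]
  rw [map_add, inner_add_left, inner_add_right, inner_add_right]
  simp only [map_add]
  rw [S.re_symm _ x y]
  ring

lemma Q_smul (u : 𝕜) (x : H) (a : X) : S.Q (u • x) a = ‖u‖ ^ 2 * S.Q x a := by
  rw [S.hQ, S.hQ, map_smul, inner_smul_left, inner_smul_right, ← mul_assoc,
    RCLike.conj_mul, ← RCLike.ofReal_pow, RCLike.re_ofReal_mul]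

lemma Q'_self (x : H) (a : X) : S.Q' x x a = 2 * S.Q x a := by rw [S.hQ', S.hQ]

lemma Q'_smul_right (t : ℝ) (x y : H) (a : X) :
    S.Q' x ((t : 𝕜) • y) a = t * S.Q' x y a := by
  rw [S.hQ', S.hQ', inner_smul_right, RCLike.re_ofReal_mul]; ring

lemma Q'_sub_right (x y z : H) (a : X) :
    S.Q' x (y - z) a = S.Q' x y a - S.Q' x z a := by
  rw [S.hQ', S.hQ', S.hQ', inner_sub_right, map_sub]; ring

lemma Q'_smul_left (t : ℝ) (x y : H) (a : X) :
    S.Q' ((t : 𝕜) • x) y a = t * S.Q' x y a := by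
  rw [S.hQ', S.hQ', map_smul, inner_smul_left, RCLike.conj_ofReal, RCLike.re_ofReal_mul]; ring

lemma dualNormQ_inv_smul_Q_le (x : H) (s : ℝ) (hs : 0 < s) (hxs : ‖x‖ ^ 2 ≤ s) :
    S.dualNormQ (s⁻¹ • S.Q x) ≤ 1 := by
  apply Real.sSup_le _ zero_le_one
  rintro r ⟨b, hb, rfl⟩
  have hT : ‖S.T (inclusionInDoubleDual ℝ X b)‖ ≤ 1 := hb
  have h1 : S.Q x b ≤ s := by
    rw [S.hQ]
    have h2 : RCLike.re (inner 𝕜 (S.T (inclusionInDoubleDual ℝ X b) x) x : 𝕜)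
        ≤ ‖(inner 𝕜 (S.T (inclusionInDoubleDual ℝ X b) x) x : 𝕜)‖ := RCLike.re_le_norm _
    have h3 : ‖(inner 𝕜 (S.T (inclusionInDoubleDual ℝ X b) x) x : 𝕜)‖
        ≤ ‖S.T (inclusionInDoubleDual ℝ X b) x‖ * ‖x‖ := norm_inner_le_norm _ _
    have h4 : ‖S.T (inclusionInDoubleDual ℝ X b) x‖
        ≤ ‖S.T (inclusionInDoubleDual ℝ X b)‖ * ‖x‖ := (S.T _).le_opNorm x
    nlinarith [norm_nonneg (S.T (inclusionInDoubleDual ℝ X b) x), norm_nonneg x,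
      sq_nonneg ‖x‖, norm_nonneg (S.T (inclusionInDoubleDual ℝ X b))]
  have h5 : (s⁻¹ • S.Q x) b = s⁻¹ * S.Q x b := rfl
  rw [h5]
  calc s⁻¹ * S.Q x b ≤ s⁻¹ * s := by
        apply mul_le_mul_of_nonneg_left h1 (le_of_lt (inv_pos.mpr hs))
    _ = 1 := inv_mul_cancel₀ hs.ne'

/-- Key lemma: for `f` an extreme point of the `X_Q*`-unit ball, `Qω = f`,
any unit-norm solution `ν` of `Qν = f` satisfies `Q'_ω ν = 2 re⟪ω,ν⟫ • f`. -/
lemma keyL (f : StrongDual ℝ X)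
    (hf : f ∈ Set.extremePoints ℝ {g : StrongDual ℝ X | S.dualNormQ g ≤ 1})
    (ω : H) (hω1 : ‖ω‖ = 1) (hQω : S.Q ω = f)
    (ν : H) (hν1 : ‖ν‖ = 1) (hQν : S.Q ν = f) :
    S.Q' ω ν = (2 * RCLike.re (inner 𝕜 ω ν : 𝕜)) • f := by
  obtain ⟨hfC, hext⟩ := hf
  set r : ℝ := RCLike.re (inner 𝕜 ω ν : 𝕜) with hr
  have hrle : |r| ≤ 1 := by
    calc |r| ≤ ‖(inner 𝕜 ω ν : 𝕜)‖ := RCLike.abs_re_le_norm _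
      _ ≤ ‖ω‖ * ‖ν‖ := norm_inner_le_norm _ _
      _ = 1 := by rw [hω1, hν1]; ring
  set νh : H := (((1:ℝ)/2 : ℝ) : 𝕜) • ν with hνh
  have hνhn : ‖νh‖ = 1/2 := by
    rw [hνh, norm_smul, RCLike.norm_ofReal, hν1]; norm_num
  have hre : RCLike.re (inner 𝕜 ω νh : 𝕜) = r / 2 := by
    rw [hνh, inner_smul_right, RCLike.re_ofReal_mul]; ring
  have hA : ‖ω + νh‖ ^ 2 = 5/4 + r := by
    rw [@norm_add_sq 𝕜, hω1, hνhn, hre]; ring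
  have hB : ‖ω - νh‖ ^ 2 = 5/4 - r := by
    rw [@norm_sub_sq 𝕜, hω1, hνhn, hre]; ring
  have habs := abs_le.mp hrle
  have hApos : (0:ℝ) < 5/4 + r := by linarith [habs.1]
  have hBpos : (0:ℝ) < 5/4 - r := by linarith [habs.2]
  have hplus : ∀ a : X, S.Q (ω + νh) a = (5/4) * f a + (1/2) * S.Q' ω ν a := by
    intro a
    rw [S.Q_add, hνh, S.Q'_smul_right, S.Q_smul, hQω, hQν, RCLike.norm_ofReal]
    rw [abs_of_nonneg (by norm_num : (0:ℝ) ≤ 1/2)]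
    ring
  have hsub : ω - νh = ω + ((-(1/2) : ℝ) : 𝕜) • ν := by
    rw [hνh, sub_eq_add_neg, ← neg_smul, RCLike.ofReal_neg]
  have hminus : ∀ a : X, S.Q (ω - νh) a = (5/4) * f a - (1/2) * S.Q' ω ν a := by
    intro a
    rw [hsub, S.Q_add, S.Q'_smul_right, S.Q_smul, hQω, hQν, RCLike.norm_ofReal]
    rw [abs_of_nonpos (by norm_num : (-(1/2):ℝ) ≤ 0)]
    ring
  set g₁ : StrongDual ℝ X := (5/4 + r)⁻¹ • S.Q (ω + νh) with hg₁def
  set g₂ : StrongDual ℝ X := (5/4 - r)⁻¹ • S.Q (ω - νh) with hg₂def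
  have hg₁mem : g₁ ∈ {g : StrongDual ℝ X | S.dualNormQ g ≤ 1} :=
    S.dualNormQ_inv_smul_Q_le _ _ hApos (le_of_eq hA)
  have hg₂mem : g₂ ∈ {g : StrongDual ℝ X | S.dualNormQ g ≤ 1} :=
    S.dualNormQ_inv_smul_Q_le _ _ hBpos (le_of_eq hB)
  have hcomb : ((2:ℝ)/5 * (5/4 + r)) • g₁ + ((2:ℝ)/5 * (5/4 - r)) • g₂ = f := by
    ext a
    simp only [ContinuousLinearMap.add_apply, ContinuousLinearMap.coe_smul',
      Pi.smul_apply, smul_eq_mul, hg₁def, hg₂def]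
    have e1 : (2:ℝ)/5 * (5/4+r) * (5/4+r)⁻¹ = 2/5 := by
      rw [mul_assoc, mul_inv_cancel₀ hApos.ne', mul_one]
    have e2 : (2:ℝ)/5 * (5/4-r) * (5/4-r)⁻¹ = 2/5 := by
      rw [mul_assoc, mul_inv_cancel₀ hBpos.ne', mul_one]
    rw [← mul_assoc, ← mul_assoc, e1, e2, hplus a, hminus a]
    ring
  have hseg : f ∈ openSegment ℝ g₁ g₂ :=
    ⟨(2:ℝ)/5 * (5/4 + r), (2:ℝ)/5 * (5/4 - r),
      by positivity, by positivity, by ring, hcomb⟩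
  have hg₁ : g₁ = f := (hext hg₁mem hg₂mem hseg)
  ext a
  have h1 : (5/4 + r)⁻¹ * S.Q (ω + νh) a = f a := by
    have := congrArg (fun (g : StrongDual ℝ X) => g a) hg₁
    simpa [hg₁def] using this
  have h2 : S.Q (ω + νh) a = (5/4 + r) * f a := by
    rw [← h1, ← mul_assoc, mul_inv_cancel₀ hApos.ne', one_mul]
  rw [hplus a] at h2
  simp only [ContinuousLinearMap.coe_smul', Pi.smul_apply, smul_eq_mul]
  linarith

end Aux

end CLMS


/-- under (Sym), for `f` an extreme point of the `X_Q*`-unit ball,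
minimum norm solutions of `Qω = f` are unique up to a unimodular scalar. -/
theorem stmt_13 {𝕜 X H : Type*} [RCLike 𝕜]
    [NormedAddCommGroup X] [NormedSpace ℝ X] [CompleteSpace X]
    [TopologicalSpace.SeparableSpace (StrongDual ℝ X)]
    [NormedAddCommGroup H] [InnerProductSpace 𝕜 H] [CompleteSpace H]
    (S : CLMS 𝕜 X H) (hSym : S.Sym) (f : StrongDual ℝ X)
    (hf : f ∈ Set.extremePoints ℝ {g : StrongDual ℝ X | S.dualNormQ g ≤ 1})
    (ω γ : H) (hω : ω ∈ S.A) (hγ : γ ∈ S.A)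
    (hQω : S.Q ω = f) (hQγ : S.Q γ = f) :
    ∃ c : 𝕜, ‖c‖ = 1 ∧ γ = c • ω := by
  obtain ⟨hω1, hωQ⟩ := hω
  obtain ⟨hγ1, hγQ⟩ := hγ
  set w : 𝕜 := inner 𝕜 ω γ with hw
  -- Step 1: w ≠ 0 via (Sym) and the key lemma
  have hw0 : w ≠ 0 := by
    obtain ⟨c₀, hc₀1, hc₀ne⟩ := hSym ω ⟨hω1, hωQ⟩ γ ⟨hγ1, hγQ⟩ (by rw [hQω, hQγ])
    intro h0
    apply hc₀ne
    have hqc : S.Q (c₀ • γ) = f := by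
      ext a; rw [S.Q_smul, hc₀1, one_pow, one_mul, hQγ]
    have hnc : ‖c₀ • γ‖ = 1 := by rw [norm_smul, hc₀1, hγ1, one_mul]
    have hkey := S.keyL f hf ω hω1 hQω (c₀ • γ) hnc hqc
    have hz : (inner 𝕜 ω (c₀ • γ) : 𝕜) = 0 := by
      rw [inner_smul_right, ← hw, h0, mul_zero]
    rw [hkey, hz]
    simp
  -- Step 2: rotate γ so that the inner product is the positive real r = ‖w‖
  set u : 𝕜 := (starRingEnd 𝕜) w / (‖w‖ : 𝕜) with hu
  have hwne : ((‖w‖ : ℝ) : 𝕜) ≠ 0 := by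
    exact_mod_cast RCLike.ofReal_ne_zero.mpr (norm_ne_zero_iff.mpr hw0)
  have hun : ‖u‖ = 1 := by
    rw [hu, norm_div, RCLike.norm_conj, RCLike.norm_ofReal, abs_norm,
      div_self (norm_ne_zero_iff.mpr hw0)]
  have hu0 : u ≠ 0 := by
    intro h; rw [h, norm_zero] at hun; exact zero_ne_one hun
  set γ₁ : H := u • γ with hγ₁def
  have hγ₁n : ‖γ₁‖ = 1 := by rw [hγ₁def, norm_smul, hun, hγ1, one_mul]
  have hQγ₁ : S.Q γ₁ = f := by
    ext a; rw [hγ₁def, S.Q_smul, hun, one_pow, one_mul, hQγ]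
  set r : ℝ := ‖w‖ with hrdef
  have hr0 : 0 < r := norm_pos_iff.mpr hw0
  have hz : (inner 𝕜 ω γ₁ : 𝕜) = ((r : ℝ) : 𝕜) := by
    rw [hγ₁def, inner_smul_right, ← hw, hu, div_mul_eq_mul_div, RCLike.conj_mul,
      sq, mul_div_assoc, div_self hwne, mul_one]
  have hz' : (inner 𝕜 γ₁ ω : 𝕜) = ((r : ℝ) : 𝕜) := by
    rw [← inner_conj_symm, hz, RCLike.conj_ofReal]
  have hr1 : r ≤ 1 := by
    have := norm_inner_le_norm (𝕜 := 𝕜) ω γ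
    rw [hω1, hγ1, one_mul, ← hw] at this
    exact this
  rcases eq_or_lt_of_le hr1 with hreq | hrlt
  · -- r = 1 : equality in Cauchy-Schwarz, γ₁ = ω
    have hz2 : ‖γ₁ - ω‖ ^ 2 = 0 := by
      rw [@norm_sub_sq 𝕜, hγ₁n, hω1, hz', RCLike.ofReal_re, hreq]; ring
    have hγ₁ω : γ₁ = ω := by
      have := pow_eq_zero_iff (n := 2) (by norm_num) |>.mp hz2
      rw [norm_eq_zero, sub_eq_zero] at this
      exact this
    refine ⟨u⁻¹, by rw [norm_inv, hun, inv_one], ?_⟩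
    have : u⁻¹ • γ₁ = u⁻¹ • ω := by rw [hγ₁ω]
    rwa [hγ₁def, smul_smul, inv_mul_cancel₀ hu0, one_smul] at this
  · -- r < 1 : build η ∈ 𝒜 orthogonal to ω, contradicting (Sym)
    exfalso
    have h1r : (0:ℝ) < 1 - r ^ 2 := by nlinarith
    set s : ℝ := Real.sqrt (1 - r ^ 2) with hsdef
    have hs0 : 0 < s := Real.sqrt_pos.mpr h1r
    have hs2 : s ^ 2 = 1 - r ^ 2 := Real.sq_sqrt h1r.le
    set δ : H := γ₁ - ((r : ℝ) : 𝕜) • ω with hδdef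
    have hQ'γ₁ : S.Q' ω γ₁ = (2 * r) • f := by
      have := S.keyL f hf ω hω1 hQω γ₁ hγ₁n hQγ₁
      rwa [hz, RCLike.ofReal_re] at this
    have hQ'δ : ∀ a : X, S.Q' ω δ a = 0 := by
      intro a
      rw [hδdef, S.Q'_sub_right, S.Q'_smul_right, S.Q'_self, hQω]
      have h3 : S.Q' ω γ₁ a = 2 * r * f a := by
        rw [hQ'γ₁]; simp [smul_eq_mul]
      rw [h3]; ring
    have hQδ : ∀ a : X, S.Q δ a = (1 - r ^ 2) * f a := by
      intro a
      have hγ₁eq : γ₁ = ((r : ℝ) : 𝕜) • ω + δ := by rw [hδdef]; abel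
      have h4 : S.Q γ₁ a = S.Q (((r : ℝ) : 𝕜) • ω) a
          + S.Q' (((r : ℝ) : 𝕜) • ω) δ a + S.Q δ a := by
        conv_lhs => rw [hγ₁eq]
        exact S.Q_add _ _ a
      have e5 : S.Q (((r : ℝ) : 𝕜) • ω) a = r ^ 2 * f a := by
        rw [S.Q_smul, hQω, RCLike.norm_ofReal, abs_of_pos hr0]
      have e6 : S.Q' (((r : ℝ) : 𝕜) • ω) δ a = 0 := by
        rw [S.Q'_smul_left, hQ'δ a, mul_zero]
      rw [hQγ₁, e5, e6] at h4
      linarith [h4]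
    have hδ2 : ‖δ‖ ^ 2 = 1 - r ^ 2 := by
      rw [hδdef, @norm_sub_sq 𝕜, hγ₁n, inner_smul_right, hz', norm_smul,
        RCLike.norm_ofReal, abs_of_pos hr0, hω1]
      rw [← RCLike.ofReal_mul, RCLike.ofReal_re]
      ring
    have hδn : ‖δ‖ = s := by
      rw [hsdef, ← hδ2, Real.sqrt_sq (norm_nonneg δ)]
    set η : H := ((s⁻¹ : ℝ) : 𝕜) • δ with hηdef
    have hηn : ‖η‖ = 1 := by
      rw [hηdef, norm_smul, RCLike.norm_ofReal, abs_of_pos (inv_pos.mpr hs0),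
        hδn, inv_mul_cancel₀ hs0.ne']
    have hQη : S.Q η = f := by
      ext a
      rw [hηdef, S.Q_smul, hQδ a, RCLike.norm_ofReal, abs_of_pos (inv_pos.mpr hs0),
        inv_pow, hs2, ← mul_assoc, inv_mul_cancel₀ h1r.ne', one_mul]
    have hηA : η ∈ S.A := ⟨hηn, by rw [hQη, ← hQω]; exact hωQ⟩
    obtain ⟨c', hc'1, hc'ne⟩ := hSym ω ⟨hω1, hωQ⟩ η hηA (by rw [hQω, hQη])
    apply hc'ne
    have hqc : S.Q (c' • η) = f := by
      ext a; rw [S.Q_smul, hc'1, one_pow, one_mul, hQη]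
    have hnc : ‖c' • η‖ = 1 := by rw [norm_smul, hc'1, hηn, one_mul]
    have hkey := S.keyL f hf ω hω1 hQω (c' • η) hnc hqc
    have horth : (inner 𝕜 ω η : 𝕜) = 0 := by
      rw [hηdef, inner_smul_right, hδdef, inner_sub_right, hz, inner_smul_right,
        inner_self_eq_norm_sq_to_K, hω1]
      simp
    have hz3 : (inner 𝕜 ω (c' • η) : 𝕜) = 0 := by
      rw [inner_smul_right, horth, mul_zero]
    rw [hkey, hz3]
    simp
end
end

section
/- Under the stated setting together with Assumption (Sym), if b ∈ X satisfies ‖b‖_{X_Q} = 1 and the norm function ‖·‖_{X_Q} : X → ℝ is Fréchet differentiable at b, then the eigenspace ker(I − T_b) = {ω ∈ H : T_b ω = ω} is one-dimensional over 𝕂. -/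
open NormedSpace Filter Topology

noncomputable section

/-- under (Sym), if `‖·‖_{X_Q}` is Fréchet differentiable at a
unit-sphere point `b`, then `ker (I - T_b)` is one-dimensional over `𝕜`. -/
theorem stmt_14 {𝕜 X H : Type*} [RCLike 𝕜]
    [NormedAddCommGroup X] [NormedSpace ℝ X] [CompleteSpace X]
    [TopologicalSpace.SeparableSpace (StrongDual ℝ X)]
    [NormedAddCommGroup H] [InnerProductSpace 𝕜 H] [CompleteSpace H]
    (S : CLMS 𝕜 X H) (hSym : S.Sym) (b : X) (hb : S.normQ b = 1)
    (hdiff : DifferentiableAt ℝ S.normQ b) :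
    ∃ ω : H, ω ≠ 0 ∧
      {γ : H | S.T (inclusionInDoubleDual ℝ X b) γ = γ} =
        {γ : H | ∃ c : 𝕜, γ = c • ω} := by
  classical
  have hTb1 : ‖S.T (inclusionInDoubleDual ℝ X b)‖ = 1 := hb
  -- Part I: existence of a unit eigenvector with eigenvalue 1
  obtain ⟨ω, hω1, hωe⟩ : ∃ ω : H, ‖ω‖ = 1 ∧ S.T (inclusionInDoubleDual ℝ X b) ω = ω := by
    set Tb := S.T (inclusionInDoubleDual ℝ X b) with hTbdef
    set Sset : Set ℝ :=
      {r : ℝ | ∃ f : H, ‖f‖ = 1 ∧ RCLike.re (inner 𝕜 (Tb f) f : 𝕜) = r} with hSset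
    have hsup : sSup Sset = 1 := by
      rw [← S.norm_eq (inclusionInDoubleDual ℝ X b)]; exact hTb1
    have hne : Sset.Nonempty := by
      rcases Set.eq_empty_or_nonempty Sset with h | h
      · rw [h, Real.sSup_empty] at hsup; norm_num at hsup
      · exact h
    have hub : ∀ r ∈ Sset, r ≤ 1 := by
      rintro r ⟨f, hf, rfl⟩
      calc RCLike.re (inner 𝕜 (Tb f) f : 𝕜) ≤ ‖(inner 𝕜 (Tb f) f : 𝕜)‖ := RCLike.re_le_norm _
        _ ≤ ‖Tb f‖ * ‖f‖ := norm_inner_le_norm _ _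
        _ ≤ ‖Tb‖ * ‖f‖ * ‖f‖ :=
            mul_le_mul_of_nonneg_right (Tb.le_opNorm f) (norm_nonneg f)
        _ = 1 := by rw [hf, hTb1]; ring
    have hseq : ∀ n : ℕ, ∃ f : H, ‖f‖ = 1 ∧
        1 - 1 / ((n : ℝ) + 1) < RCLike.re (inner 𝕜 (Tb f) f : 𝕜) := by
      intro n
      have h1 : 1 - 1 / ((n : ℝ) + 1) < sSup Sset := by
        rw [hsup]
        have : (0 : ℝ) < 1 / ((n : ℝ) + 1) := by positivity
        linarith
      obtain ⟨r, hr, hlt⟩ := exists_lt_of_lt_csSup hne h1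
      obtain ⟨f, hf, rfl⟩ := hr
      exact ⟨f, hf, hlt⟩
    choose f hf1 hflt using hseq
    have htend : Tendsto (fun n : ℕ => RCLike.re (inner 𝕜 (Tb (f n)) (f n) : 𝕜)) atTop (𝓝 1) := by
      have hlow : Tendsto (fun n : ℕ => 1 - 1 / ((n : ℝ) + 1)) atTop (𝓝 1) := by
        have h0 : Tendsto (fun n : ℕ => 1 / ((n : ℝ) + 1)) atTop (𝓝 0) :=
          tendsto_one_div_add_atTop_nhds_zero_nat
        have h1 : Tendsto (fun _ : ℕ => (1 : ℝ)) atTop (𝓝 1) := tendsto_const_nhds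
        simpa using h1.sub h0
      exact tendsto_of_tendsto_of_tendsto_of_le_of_le hlow tendsto_const_nhds
        (fun n => (hflt n).le) (fun n => hub _ ⟨f n, hf1 n, rfl⟩)
    have hgs : ∀ n : ℕ, ‖Tb (f n) - f n‖ ≤
        Real.sqrt (2 - 2 * RCLike.re (inner 𝕜 (Tb (f n)) (f n) : 𝕜)) := by
      intro n
      have hTle : ‖Tb (f n)‖ ≤ 1 := by
        have := Tb.le_opNorm (f n)
        rw [hf1 n, hTb1] at this; simpa using this
      have hsq : ‖Tb (f n) - f n‖ ^ 2 ≤ 2 - 2 * RCLike.re (inner 𝕜 (Tb (f n)) (f n) : 𝕜) := by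
        rw [norm_sub_sq (𝕜 := 𝕜), hf1 n]
        nlinarith [norm_nonneg (Tb (f n))]
      calc ‖Tb (f n) - f n‖ = Real.sqrt (‖Tb (f n) - f n‖ ^ 2) := by
            rw [Real.sqrt_sq (norm_nonneg _)]
        _ ≤ _ := Real.sqrt_le_sqrt hsq
    have hg0 : Tendsto (fun n : ℕ => Tb (f n) - f n) atTop (𝓝 0) := by
      rw [tendsto_zero_iff_norm_tendsto_zero]
      refine squeeze_zero (fun n => norm_nonneg _) hgs ?_
      have h2 : Tendsto (fun n : ℕ => 2 - 2 * RCLike.re (inner 𝕜 (Tb (f n)) (f n) : 𝕜))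
          atTop (𝓝 0) := by
        have := (htend.const_mul (2 : ℝ))
        have h2' : Tendsto (fun _ : ℕ => (2 : ℝ)) atTop (𝓝 2) := tendsto_const_nhds
        simpa using h2'.sub this
      have := h2.sqrt
      simpa using this
    obtain ⟨K, hK, hKmem⟩ := S.compact b
    obtain ⟨ε, hε, hball⟩ := Metric.mem_nhds_iff.mp hKmem
    set δ : ℝ := ε / 2 with hδdef
    have hδ : 0 < δ := by positivity
    have hmem : ∀ n : ℕ, Tb (((δ : ℝ) : 𝕜) • f n) ∈ K := by
      intro n
      apply hball
      rw [Metric.mem_ball, dist_zero_right, norm_smul, hf1 n, RCLike.norm_ofReal,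
        abs_of_pos hδ]
      simp only [mul_one, hδdef]
      linarith
    obtain ⟨y, hyK, φ, hφ, hty⟩ := hK.tendsto_subseq hmem
    have hδne : ((δ : ℝ) : 𝕜) ≠ 0 := by
      simpa using hδ.ne'
    have hTf : Tendsto (fun n : ℕ => Tb (f (φ n))) atTop (𝓝 (((δ : ℝ) : 𝕜)⁻¹ • y)) := by
      have heq : (fun n : ℕ => Tb (f (φ n)))
          = fun n : ℕ => ((δ : ℝ) : 𝕜)⁻¹ • Tb (((δ : ℝ) : 𝕜) • f (φ n)) := by
        funext n
        rw [map_smul, smul_smul, inv_mul_cancel₀ hδne, one_smul]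
      rw [heq]
      exact hty.const_smul _
    have hfto : Tendsto (fun n : ℕ => f (φ n)) atTop (𝓝 (((δ : ℝ) : 𝕜)⁻¹ • y)) := by
      have heq : (fun n : ℕ => f (φ n))
          = fun n : ℕ => Tb (f (φ n)) - (Tb (f (φ n)) - f (φ n)) := by
        funext n; abel
      rw [heq]
      have hg0' : Tendsto (fun n : ℕ => Tb (f (φ n)) - f (φ n)) atTop (𝓝 0) :=
        hg0.comp hφ.tendsto_atTop
      simpa using hTf.sub hg0'
    refine ⟨((δ : ℝ) : 𝕜)⁻¹ • y, ?_, ?_⟩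
    · have h1 : Tendsto (fun n : ℕ => ‖f (φ n)‖) atTop (𝓝 ‖((δ : ℝ) : 𝕜)⁻¹ • y‖) :=
        hfto.norm
      have h2 : Tendsto (fun n : ℕ => ‖f (φ n)‖) atTop (𝓝 1) := by
        simp only [hf1]; exact tendsto_const_nhds
      exact tendsto_nhds_unique h1 h2
    · have h1 : Tendsto (fun n : ℕ => Tb (f (φ n))) atTop
          (𝓝 (Tb (((δ : ℝ) : 𝕜)⁻¹ • y))) :=
        (Tb.continuous.tendsto _).comp hfto
      exact tendsto_nhds_unique h1 hTf
  -- Part II: preliminaries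
  have hre : ∀ γ : H, ‖γ‖ = 1 → S.T (inclusionInDoubleDual ℝ X b) γ = γ → S.Q γ b = 1 := by
    intro γ h1 he
    rw [S.hQ, he, inner_self_eq_norm_sq, h1]; norm_num
  have hsupport : ∀ γ : H, ‖γ‖ = 1 → ∀ x : X, S.Q γ x ≤ S.normQ x := by
    intro γ h1 x
    rw [S.hQ]
    calc RCLike.re (inner 𝕜 (S.T (inclusionInDoubleDual ℝ X x) γ) γ : 𝕜)
        ≤ ‖(inner 𝕜 (S.T (inclusionInDoubleDual ℝ X x) γ) γ : 𝕜)‖ := RCLike.re_le_norm _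
      _ ≤ ‖S.T (inclusionInDoubleDual ℝ X x) γ‖ * ‖γ‖ := norm_inner_le_norm _ _
      _ ≤ ‖S.T (inclusionInDoubleDual ℝ X x)‖ * ‖γ‖ * ‖γ‖ :=
          mul_le_mul_of_nonneg_right ((S.T _).le_opNorm γ) (norm_nonneg γ)
      _ = S.normQ x := by rw [h1, CLMS.normQ]; ring
  set L := fderiv ℝ S.normQ b with hLdef
  have hQeq : ∀ γ : H, ‖γ‖ = 1 → S.T (inclusionInDoubleDual ℝ X b) γ = γ → S.Q γ = L := by
    intro γ h1 he
    ext x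
    have hline : HasDerivAt (fun t : ℝ => b + t • x) x 0 := by
      simpa using ((hasDerivAt_id (0 : ℝ)).smul_const x).const_add b
    have h0 : b + (0 : ℝ) • x = b := by simp
    have hF : HasFDerivAt S.normQ L (b + (0 : ℝ) • x) := h0.symm ▸ hdiff.hasFDerivAt
    have hφ : HasDerivAt (fun t : ℝ => S.normQ (b + t • x)) (L x) 0 :=
      by have := hF.comp_hasDerivAt 0 hline; exact this
    have hψ : HasDerivAt (fun t : ℝ => S.normQ (b + t • x) - t * S.Q γ x)
        (L x - S.Q γ x) 0 := by
      have := hφ.sub ((hasDerivAt_id' (x := (0 : ℝ))).mul_const (S.Q γ x))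
      simp only [one_mul] at this
      exact this
    have hmin : IsLocalMin (fun t : ℝ => S.normQ (b + t • x) - t * S.Q γ x) 0 := by
      refine Filter.Eventually.of_forall fun t => ?_
      have hs : S.Q γ (b + t • x) ≤ S.normQ (b + t • x) := hsupport γ h1 _
      have hcalc : S.Q γ (b + t • x) = 1 + t * S.Q γ x := by
        rw [map_add, map_smul, hre γ h1 he, smul_eq_mul]
      simp only [zero_smul, add_zero, zero_mul, sub_zero]
      rw [hb]
      linarith [hs, hcalc ▸ hs]
    have hz := hmin.hasDerivAt_eq_zero hψ
    linarith [sub_eq_zero.mp hz]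
  have hmemA : ∀ γ : H, ‖γ‖ = 1 → S.T (inclusionInDoubleDual ℝ X b) γ = γ → γ ∈ S.A := by
    intro γ h1 he
    refine ⟨h1, ?_⟩
    simp only [CLMS.dualNormQ]
    have hmem1 : (1 : ℝ) ∈ {r : ℝ | ∃ x : X, S.normQ x ≤ 1 ∧ S.Q γ x = r} :=
      ⟨b, hb.le, hre γ h1 he⟩
    have hbd : ∀ r ∈ {r : ℝ | ∃ x : X, S.normQ x ≤ 1 ∧ S.Q γ x = r}, r ≤ 1 := by
      rintro r ⟨x, hx, rfl⟩
      exact (hsupport γ h1 x).trans hx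
    exact le_antisymm (csSup_le ⟨1, hmem1⟩ hbd) (le_csSup ⟨1, hbd⟩ hmem1)
  have hexp : ∀ (u w : H) (a : X), S.Q (u + w) a = S.Q u a + S.Q w a + S.Q' u w a := by
    intro u w a
    have hsa :=
      ContinuousLinearMap.isSelfAdjoint_iff_isSymmetric.mp
        (S.selfAdj (inclusionInDoubleDual ℝ X a))
    have h1 : (inner 𝕜 (S.T (inclusionInDoubleDual ℝ X a) w) u : 𝕜)
        = starRingEnd 𝕜 (inner 𝕜 (S.T (inclusionInDoubleDual ℝ X a) u) w : 𝕜) :=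
      (hsa w u).trans (inner_conj_symm w _).symm
    rw [S.hQ, S.hQ, S.hQ, S.hQ', map_add, inner_add_left, inner_add_right, inner_add_right,
      h1]
    simp only [map_add, RCLike.conj_re]
    ring
  have hQsmul : ∀ (c : 𝕜) (w : H) (a : X), S.Q (c • w) a = ‖c‖ ^ 2 * S.Q w a := by
    intro c w a
    rw [S.hQ, S.hQ, map_smul, inner_smul_left, inner_smul_right, ← mul_assoc,
      RCLike.conj_mul, ← RCLike.ofReal_pow, RCLike.re_ofReal_mul]
  -- the key vanishing lemma
  have hQ'zero : ∀ γ : H, ‖γ‖ = 1 → S.T (inclusionInDoubleDual ℝ X b) γ = γ →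
      (inner 𝕜 ω γ : 𝕜) = 0 → ∀ c : 𝕜, ‖c‖ = 1 → S.Q' ω (c • γ) = 0 := by
    intro γ h1 he hperp c hc
    set γ'' : H := c • γ with hγ''
    have hγ''1 : ‖γ''‖ = 1 := by rw [hγ'', norm_smul, hc, h1]; ring
    have hγ''e : S.T (inclusionInDoubleDual ℝ X b) γ'' = γ'' := by
      rw [hγ'', map_smul, he]
    have hperp'' : (inner 𝕜 ω γ'' : 𝕜) = 0 := by
      rw [hγ'', inner_smul_right, hperp, mul_zero]
    set v : H := ω + γ'' with hv
    have hv2 : ‖v‖ ^ 2 = 2 := by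
      rw [hv, norm_add_sq (𝕜 := 𝕜), hω1, hγ''1, hperp'']
      norm_num
    have hvne : v ≠ 0 := by
      intro h
      rw [h] at hv2; norm_num at hv2
    have hvnorm : ‖v‖ ≠ 0 := norm_ne_zero_iff.mpr hvne
    set w : H := ((‖v‖⁻¹ : ℝ) : 𝕜) • v with hw
    have hw1 : ‖w‖ = 1 := by
      rw [hw, norm_smul, RCLike.norm_ofReal, abs_of_nonneg (inv_nonneg.mpr (norm_nonneg v)),
        inv_mul_cancel₀ hvnorm]
    have hwe : S.T (inclusionInDoubleDual ℝ X b) w = w := by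
      rw [hw, map_smul]
      have hve : S.T (inclusionInDoubleDual ℝ X b) v = v := by
        rw [hv, map_add, hωe, hγ''e]
      rw [hve]
    have hQw : S.Q w = L := hQeq w hw1 hwe
    have hQγ'' : S.Q γ'' = L := hQeq γ'' hγ''1 hγ''e
    have hQω : S.Q ω = L := hQeq ω hω1 hωe
    ext a
    have hva : v = ((‖v‖ : ℝ) : 𝕜) • w := by
      rw [hw, smul_smul, ← RCLike.ofReal_mul, mul_inv_cancel₀ hvnorm]
      simp
    have hQv : S.Q v a = 2 * L a := by
      rw [hva, hQsmul, RCLike.norm_ofReal, abs_of_nonneg (norm_nonneg v), hQw, hv2]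
    have hQv' : S.Q v a = L a + L a + S.Q' ω γ'' a := by
      rw [hv, hexp, hQω, hQγ'']
    have : S.Q' ω γ'' a = 0 := by linarith
    simpa using this
  -- assemble
  refine ⟨ω, ?_, ?_⟩
  · intro h
    rw [h, norm_zero] at hω1; norm_num at hω1
  · ext γ
    simp only [Set.mem_setOf_eq]
    constructor
    · intro he
      set d : 𝕜 := inner 𝕜 ω γ with hd
      set γ₂ : H := γ - d • ω with hγ₂
      have hγ₂e : S.T (inclusionInDoubleDual ℝ X b) γ₂ = γ₂ := by
        rw [hγ₂, map_sub, map_smul, he, hωe]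
      have hperp : (inner 𝕜 ω γ₂ : 𝕜) = 0 := by
        rw [hγ₂, inner_sub_right, inner_smul_right, inner_self_eq_norm_sq_to_K, hω1]
        simp [hd]
      have hγ₂0 : γ₂ = 0 := by
        by_contra h2
        have hnγ₂ : ‖γ₂‖ ≠ 0 := norm_ne_zero_iff.mpr h2
        set γ' : H := ((‖γ₂‖⁻¹ : ℝ) : 𝕜) • γ₂ with hγ'
        have hγ'1 : ‖γ'‖ = 1 := by
          rw [hγ', norm_smul, RCLike.norm_ofReal,
            abs_of_nonneg (inv_nonneg.mpr (norm_nonneg γ₂)), inv_mul_cancel₀ hnγ₂]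
        have hγ'e : S.T (inclusionInDoubleDual ℝ X b) γ' = γ' := by
          rw [hγ', map_smul, hγ₂e]
        have hperp' : (inner 𝕜 ω γ' : 𝕜) = 0 := by
          rw [hγ', inner_smul_right, hperp, mul_zero]
        obtain ⟨c, hc, hcne⟩ :=
          hSym ω (hmemA ω hω1 hωe) γ' (hmemA γ' hγ'1 hγ'e)
            (by rw [hQeq ω hω1 hωe, hQeq γ' hγ'1 hγ'e])
        exact hcne (hQ'zero γ' hγ'1 hγ'e hperp' c hc)
      refine ⟨d, ?_⟩
      have := sub_eq_zero.mp (hγ₂ ▸ hγ₂0)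
      exact this
    · rintro ⟨c, rfl⟩
      rw [map_smul, hωe]
end
end

section
/- Under the stated setting, for every b ∈ X with ‖b‖_{X_Q} = 1, the convex set D(b) has finite affine dimension: there exist a point h₀ ∈ X* and a finite-dimensional linear subspace V ⊆ X* such that D(b) ⊆ h₀ + V. -/
set_option linter.unusedSectionVars false


open NormedSpace Filter Topology

noncomputable section

namespace CLMS

variable {𝕜 X H : Type*} [RCLike 𝕜]
    [NormedAddCommGroup X] [NormedSpace ℝ X] [CompleteSpace X]
    [NormedAddCommGroup H] [InnerProductSpace 𝕜 H] [CompleteSpace H]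

lemma norm_incl (x : X) : ‖inclusionInDoubleDual ℝ X x‖ = ‖x‖ :=
  (inclusionInDoubleDualLi ℝ).norm_map x

lemma T_zero (S : CLMS 𝕜 X H) : S.T 0 = 0 := by
  ext ω
  have := S.T_smul 0 0 ω
  simpa using this

lemma normQ_nonneg (S : CLMS 𝕜 X H) (x : X) : 0 ≤ S.normQ x := norm_nonneg _

lemma T_incl_smul (S : CLMS 𝕜 X H) (r : ℝ) (x : X) :
    S.T (inclusionInDoubleDual ℝ X (r • x)) = (r : 𝕜) • S.T (inclusionInDoubleDual ℝ X x) := by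
  ext ω
  rw [map_smul]
  rw [S.T_smul]
  rfl

lemma normQ_smul (S : CLMS 𝕜 X H) (r : ℝ) (x : X) : S.normQ (r • x) = |r| * S.normQ x := by
  show ‖S.T (inclusionInDoubleDual ℝ X (r • x))‖ = _
  rw [S.T_incl_smul]
  rw [norm_smul ((r : ℝ) : 𝕜) (S.T (inclusionInDoubleDual ℝ X x)), RCLike.norm_ofReal]
  rfl

lemma eq_zero_of_normQ_eq_zero (S : CLMS 𝕜 X H) {x : X} (hx : S.normQ x = 0) : x = 0 := by
  have h1 := S.lower (inclusionInDoubleDual ℝ X x)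
  rw [norm_incl] at h1
  have h2 : ‖S.T (inclusionInDoubleDual ℝ X x)‖ = 0 := hx
  rw [h2] at h1
  have : ‖x‖ ≤ 0 := by
    by_contra hc
    push_neg at hc
    nlinarith [S.c_pos]
  exact norm_le_zero_iff.mp this

lemma bddAboveQ (S : CLMS 𝕜 X H) (h : StrongDual ℝ X) :
    BddAbove {r : ℝ | ∃ b : X, S.normQ b ≤ 1 ∧ h b = r} := by
  refine ⟨‖h‖ * (1 / S.c), ?_⟩
  rintro r ⟨b, hb, rfl⟩
  have h1 : S.c * ‖b‖ ≤ 1 := by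
    have := S.lower (inclusionInDoubleDual ℝ X b)
    rw [norm_incl] at this
    exact this.trans hb
  have h2 : ‖b‖ ≤ 1 / S.c := by
    rw [le_div_iff₀ S.c_pos, mul_comm]
    exact h1
  calc h b ≤ |h b| := le_abs_self _
    _ = ‖h b‖ := (Real.norm_eq_abs _).symm
    _ ≤ ‖h‖ * ‖b‖ := h.le_opNorm b
    _ ≤ ‖h‖ * (1 / S.c) := by
        exact mul_le_mul_of_nonneg_left h2 (norm_nonneg _)

lemma le_dualNormQ (S : CLMS 𝕜 X H) (h : StrongDual ℝ X) {x : X} (hx : S.normQ x ≤ 1) :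
    h x ≤ S.dualNormQ h :=
  le_csSup (S.bddAboveQ h) ⟨x, hx, rfl⟩

lemma apply_le (S : CLMS 𝕜 X H) (h : StrongDual ℝ X) (x : X) :
    h x ≤ S.dualNormQ h * S.normQ x := by
  by_cases hx : S.normQ x = 0
  · have hx0 := S.eq_zero_of_normQ_eq_zero hx
    rw [hx0] at hx ⊢
    simp [hx]
  · have hpos : 0 < S.normQ x := lt_of_le_of_ne (S.normQ_nonneg x) (Ne.symm hx)
    have h1 : S.normQ ((S.normQ x)⁻¹ • x) ≤ 1 := by
      rw [S.normQ_smul, abs_of_pos (inv_pos.mpr hpos), inv_mul_cancel₀ hx]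
    have h2 := S.le_dualNormQ h h1
    rw [map_smul, smul_eq_mul] at h2
    calc h x = S.normQ x * ((S.normQ x)⁻¹ * h x) := by field_simp
      _ ≤ S.normQ x * S.dualNormQ h := by
          exact mul_le_mul_of_nonneg_left h2 hpos.le
      _ = S.dualNormQ h * S.normQ x := mul_comm _ _

lemma Q_le (S : CLMS 𝕜 X H) {ω : H} (hω : ‖ω‖ = 1) (x : X) : S.Q ω x ≤ S.normQ x := by
  rw [S.hQ]
  calc RCLike.re (inner 𝕜 (S.T (inclusionInDoubleDual ℝ X x) ω) ω : 𝕜)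
      ≤ ‖S.T (inclusionInDoubleDual ℝ X x) ω‖ * ‖ω‖ := re_inner_le_norm _ _
    _ ≤ (‖S.T (inclusionInDoubleDual ℝ X x)‖ * ‖ω‖) * ‖ω‖ := by
        exact mul_le_mul_of_nonneg_right ((S.T _).le_opNorm ω) (norm_nonneg _)
    _ = S.normQ x := by rw [hω]; ring_nf; rfl

lemma abs_Q_le (S : CLMS 𝕜 X H) {ω : H} (hω : ‖ω‖ = 1) (x : X) : |S.Q ω x| ≤ S.C * ‖x‖ := by
  rw [S.hQ]
  calc |RCLike.re (inner 𝕜 (S.T (inclusionInDoubleDual ℝ X x) ω) ω : 𝕜)|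
      ≤ ‖(inner 𝕜 (S.T (inclusionInDoubleDual ℝ X x) ω) ω : 𝕜)‖ := RCLike.abs_re_le_norm _
    _ ≤ ‖S.T (inclusionInDoubleDual ℝ X x) ω‖ * ‖ω‖ := norm_inner_le_norm _ _
    _ ≤ (‖S.T (inclusionInDoubleDual ℝ X x)‖ * ‖ω‖) * ‖ω‖ := by
        exact mul_le_mul_of_nonneg_right ((S.T _).le_opNorm ω) (norm_nonneg _)
    _ = ‖S.T (inclusionInDoubleDual ℝ X x)‖ := by rw [hω]; ring
    _ ≤ S.C * ‖inclusionInDoubleDual ℝ X x‖ := S.upper _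
    _ = S.C * ‖x‖ := by rw [norm_incl]

lemma exists_unit (S : CLMS 𝕜 X H) {b : X} (hb : S.normQ b = 1) : ∃ f : H, ‖f‖ = 1 := by
  have hne : ∃ x : H, x ≠ 0 := by
    by_contra hc
    push_neg at hc
    have : S.T (inclusionInDoubleDual ℝ X b) = 0 := by
      ext x
      rw [hc x]
      simp
    have h0 : S.normQ b = 0 := by
      show ‖S.T (inclusionInDoubleDual ℝ X b)‖ = 0
      rw [this, norm_zero]
    rw [hb] at h0
    norm_num at h0
  obtain ⟨x, hx⟩ := hne
  refine ⟨((‖x‖⁻¹ : ℝ) : 𝕜) • x, ?_⟩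
  rw [norm_smul, RCLike.norm_ofReal, abs_of_pos (inv_pos.mpr (norm_pos_iff.mpr hx)),
    inv_mul_cancel₀ (norm_ne_zero_iff.mpr hx)]

/-- The Danskin-type core estimate: any `h ∈ D(b)` is dominated by the values of `Q`
on unit fixed points of `T_b`. -/
lemma core (S : CLMS 𝕜 X H) {b : X} (hb : S.normQ b = 1) {h : StrongDual ℝ X}
    (hh1 : S.dualNormQ h = 1) (hh2 : h b = 1) {a : X} {r : ℝ}
    (hr : ∀ ω : H, ‖ω‖ = 1 → S.T (inclusionInDoubleDual ℝ X b) ω = ω → S.Q ω a ≤ r) :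
    h a ≤ r := by
  by_contra hcon
  push_neg at hcon
  obtain ⟨f₀, hf₀⟩ := S.exists_unit hb
  set t : ℕ → ℝ := fun n => ((n : ℝ) + 1)⁻¹ with ht_def
  have ht_pos : ∀ n, 0 < t n := fun n => by positivity
  have ht_le_one : ∀ n, t n ≤ 1 := by
    intro n
    rw [ht_def]
    simp only
    rw [inv_le_one_iff₀]
    right
    have : (0:ℝ) ≤ (n:ℝ) := Nat.cast_nonneg n
    linarith
  have ht0 : Filter.Tendsto t Filter.atTop (nhds 0) := by
    have := tendsto_one_div_add_atTop_nhds_zero_nat (𝕜 := ℝ)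
    simpa [ht_def, one_div] using this
  -- choose near-maximizers
  have key : ∀ n : ℕ, ∃ ω : H, ‖ω‖ = 1 ∧
      1 + t n * h a - (t n)^2 < S.Q ω b + t n * S.Q ω a := by
    intro n
    have h1 : 1 + t n * h a ≤ S.normQ (b + t n • a) := by
      have h2 := S.apply_le h (b + t n • a)
      rw [hh1, one_mul] at h2
      have h3 : h (b + t n • a) = 1 + t n * h a := by
        rw [map_add, map_smul, hh2, smul_eq_mul]
      linarith
    have h4 : 1 + t n * h a - (t n)^2 < S.normQ (b + t n • a) := by
      have := ht_pos n
      nlinarith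
    have h5 : 1 + t n * h a - (t n)^2 <
        sSup {r : ℝ | ∃ f : H, ‖f‖ = 1 ∧
          RCLike.re (inner 𝕜 ((S.T (inclusionInDoubleDual ℝ X (b + t n • a))) f) f : 𝕜) = r} := by
      rw [← S.norm_eq]
      exact h4
    have hne : Set.Nonempty {r : ℝ | ∃ f : H, ‖f‖ = 1 ∧
        RCLike.re (inner 𝕜 ((S.T (inclusionInDoubleDual ℝ X (b + t n • a))) f) f : 𝕜) = r} :=
      ⟨_, ⟨f₀, hf₀, rfl⟩⟩
    obtain ⟨r', ⟨f, hf, hfr⟩, hr'⟩ := exists_lt_of_lt_csSup hne h5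
    refine ⟨f, hf, ?_⟩
    have h6 : S.Q f (b + t n • a) = r' := by rw [S.hQ]; exact hfr
    rw [map_add, map_smul, smul_eq_mul] at h6
    linarith
  choose ω hω1 hω2 using key
  have hQb_le : ∀ n, S.Q (ω n) b ≤ 1 := by
    intro n
    have := S.Q_le (hω1 n) b
    rwa [hb] at this
  have hQa_ge : ∀ n, h a - t n ≤ S.Q (ω n) a := by
    intro n
    have h1 := hω2 n
    have h2 := hQb_le n
    have h3 := ht_pos n
    have h4 : t n * (h a - t n) < t n * S.Q (ω n) a := by nlinarith
    have := lt_of_mul_lt_mul_left h4 h3.le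
    linarith
  set K : ℝ := |h a| + 1 + S.C * ‖a‖ with hK_def
  have hQb_ge : ∀ n, 1 - t n * K ≤ S.Q (ω n) b := by
    intro n
    have h1 := hω2 n
    have h2 := S.abs_Q_le (hω1 n) a
    have h3 := ht_pos n
    have h4 := ht_le_one n
    have h5 : S.Q (ω n) a ≤ |S.Q (ω n) a| := le_abs_self _
    have h6 : -|h a| ≤ h a := neg_abs_le _
    nlinarith [abs_nonneg (h a), abs_nonneg (S.Q (ω n) a)]
  set Tb := S.T (inclusionInDoubleDual ℝ X b) with hTb_def
  have hTbnorm : ‖Tb‖ = 1 := hb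
  -- compactness
  have hco : IsCompactOperator ((Tb : H →ₗ[𝕜] H) : H → H) := by
    have := S.compact b
    rw [hTb_def]
    simpa using this
  have hcpt : IsCompact (closure ((Tb : H →ₗ[𝕜] H) '' Metric.closedBall 0 1)) :=
    hco.isCompact_closure_image_closedBall 1
  have hmem : ∀ n, Tb (ω n) ∈ closure ((Tb : H →ₗ[𝕜] H) '' Metric.closedBall 0 1) := by
    intro n
    apply subset_closure
    exact ⟨ω n, by rw [Metric.mem_closedBall, dist_zero_right, hω1 n], rfl⟩
  obtain ⟨z, -, φ, hφ, hz⟩ := hcpt.tendsto_subseq hmem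
  -- difference tends to zero
  have hdiff : Filter.Tendsto (fun n => Tb (ω n) - ω n) Filter.atTop (nhds 0) := by
    apply squeeze_zero_norm (a := fun n => Real.sqrt (2 * K * t n))
    · intro n
      have hTle : ‖Tb (ω n)‖ ≤ 1 := by
        have := Tb.le_opNorm (ω n)
        rwa [hTbnorm, hω1 n, one_mul] at this
      have hq : RCLike.re (inner 𝕜 (Tb (ω n)) (ω n) : 𝕜) = S.Q (ω n) b := (S.hQ b (ω n)).symm
      have e := norm_sub_sq (𝕜 := 𝕜) (Tb (ω n)) (ω n)
      have h1 : ‖Tb (ω n) - ω n‖^2 ≤ 2 * K * t n := by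
        rw [e, hq, hω1 n]
        have := hQb_ge n
        nlinarith [norm_nonneg (Tb (ω n))]
      calc ‖Tb (ω n) - ω n‖ = Real.sqrt (‖Tb (ω n) - ω n‖^2) :=
            (Real.sqrt_sq (norm_nonneg _)).symm
        _ ≤ Real.sqrt (2 * K * t n) := Real.sqrt_le_sqrt h1
    · have h2 : Filter.Tendsto (fun n => 2 * K * t n) Filter.atTop (nhds 0) := by
        have := ht0.const_mul (2 * K)
        simpa using this
      have h3 := (Real.continuous_sqrt.tendsto 0).comp h2
      simpa [Function.comp_def] using h3
  have hzφ : Filter.Tendsto (fun n => Tb (ω (φ n))) Filter.atTop (nhds z) := hz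
  have hωφ : Filter.Tendsto (fun n => ω (φ n)) Filter.atTop (nhds z) := by
    have h2 : Filter.Tendsto (fun n => Tb (ω (φ n)) - ω (φ n)) Filter.atTop (nhds 0) :=
      hdiff.comp hφ.tendsto_atTop
    have h3 := hzφ.sub h2
    simpa using h3
  have hznorm : ‖z‖ = 1 := by
    have h1 : Filter.Tendsto (fun n => ‖ω (φ n)‖) Filter.atTop (nhds ‖z‖) := hωφ.norm
    have h2 : Filter.Tendsto (fun n => ‖ω (φ n)‖) Filter.atTop (nhds 1) := by
      have : (fun n => ‖ω (φ n)‖) = fun _ => (1:ℝ) := funext fun n => hω1 (φ n)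
      rw [this]
      exact tendsto_const_nhds
    exact tendsto_nhds_unique h1 h2
  have hfix : Tb z = z :=
    tendsto_nhds_unique ((Tb.continuous.tendsto z).comp hωφ) hzφ
  have hQza : h a ≤ S.Q z a := by
    have hcont : Continuous (fun x : H => S.Q x a) := by
      have heq : (fun x : H => S.Q x a)
          = fun x : H => RCLike.re (inner 𝕜 (S.T (inclusionInDoubleDual ℝ X a) x) x : 𝕜) :=
        funext fun x => S.hQ a x
      rw [heq]
      exact RCLike.continuous_re.comp ((S.T _).continuous.inner continuous_id)
    have hc : Filter.Tendsto (fun n => S.Q (ω (φ n)) a) Filter.atTop (nhds (S.Q z a)) :=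
      (hcont.tendsto z).comp hωφ
    have hlb : Filter.Tendsto (fun n => h a - t n) Filter.atTop (nhds (h a)) := by
      have h4 := (tendsto_const_nhds (x := h a) (f := (Filter.atTop : Filter ℕ))).sub ht0
      simpa using h4
    refine le_of_tendsto_of_tendsto' hlb hc fun n => ?_
    have h5 := hQa_ge (φ n)
    have h6 : t (φ n) ≤ t n := by
      rw [ht_def]
      simp only
      apply inv_anti₀
      · positivity
      · have := hφ.le_apply (x := n)
        exact_mod_cast by
          have : (n : ℝ) ≤ (φ n : ℝ) := by exact_mod_cast hφ.le_apply
          linarith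
    linarith
  have := hr z hznorm hfix
  linarith

/-- Real part of `a ↦ ⟨T_a ω, γ⟩` as a continuous functional on `X`. -/
def bre (S : CLMS 𝕜 X H) (ω γ : H) : StrongDual ℝ X :=
  LinearMap.mkContinuous
    { toFun := fun a => RCLike.re (inner 𝕜 (S.T (inclusionInDoubleDual ℝ X a) ω) γ : 𝕜)
      map_add' := by
        intro a a'
        simp only [map_add, S.T_add, inner_add_left]
      map_smul' := by
        intro r a
        simp only [map_smul, RingHom.id_apply, smul_eq_mul, S.T_smul, inner_smul_left,
          RCLike.conj_ofReal, RCLike.re_ofReal_mul] }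
    (S.C * ‖ω‖ * ‖γ‖)
    (by
      intro a
      simp only [LinearMap.coe_mk, AddHom.coe_mk]
      calc ‖RCLike.re (inner 𝕜 (S.T (inclusionInDoubleDual ℝ X a) ω) γ : 𝕜)‖
          = |RCLike.re (inner 𝕜 (S.T (inclusionInDoubleDual ℝ X a) ω) γ : 𝕜)| :=
            Real.norm_eq_abs _
        _ ≤ ‖(inner 𝕜 (S.T (inclusionInDoubleDual ℝ X a) ω) γ : 𝕜)‖ := RCLike.abs_re_le_norm _
        _ ≤ ‖S.T (inclusionInDoubleDual ℝ X a) ω‖ * ‖γ‖ := norm_inner_le_norm _ _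
        _ ≤ (‖S.T (inclusionInDoubleDual ℝ X a)‖ * ‖ω‖) * ‖γ‖ :=
            mul_le_mul_of_nonneg_right ((S.T _).le_opNorm ω) (norm_nonneg _)
        _ ≤ ((S.C * ‖inclusionInDoubleDual ℝ X a‖) * ‖ω‖) * ‖γ‖ :=
            mul_le_mul_of_nonneg_right
              (mul_le_mul_of_nonneg_right (S.upper _) (norm_nonneg ω)) (norm_nonneg γ)
        _ = S.C * ‖ω‖ * ‖γ‖ * ‖a‖ := by rw [norm_incl]; ring)

/-- Imaginary part of `a ↦ ⟨T_a ω, γ⟩` as a continuous functional on `X`. -/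
def bim (S : CLMS 𝕜 X H) (ω γ : H) : StrongDual ℝ X :=
  LinearMap.mkContinuous
    { toFun := fun a => RCLike.im (inner 𝕜 (S.T (inclusionInDoubleDual ℝ X a) ω) γ : 𝕜)
      map_add' := by
        intro a a'
        simp only [map_add, S.T_add, inner_add_left]
      map_smul' := by
        intro r a
        simp only [map_smul, RingHom.id_apply, smul_eq_mul, S.T_smul, inner_smul_left,
          RCLike.conj_ofReal, RCLike.im_ofReal_mul] }
    (S.C * ‖ω‖ * ‖γ‖)
    (by
      intro a
      simp only [LinearMap.coe_mk, AddHom.coe_mk]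
      calc ‖RCLike.im (inner 𝕜 (S.T (inclusionInDoubleDual ℝ X a) ω) γ : 𝕜)‖
          = |RCLike.im (inner 𝕜 (S.T (inclusionInDoubleDual ℝ X a) ω) γ : 𝕜)| :=
            Real.norm_eq_abs _
        _ ≤ ‖(inner 𝕜 (S.T (inclusionInDoubleDual ℝ X a) ω) γ : 𝕜)‖ := RCLike.abs_im_le_norm _
        _ ≤ ‖S.T (inclusionInDoubleDual ℝ X a) ω‖ * ‖γ‖ := norm_inner_le_norm _ _
        _ ≤ (‖S.T (inclusionInDoubleDual ℝ X a)‖ * ‖ω‖) * ‖γ‖ :=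
            mul_le_mul_of_nonneg_right ((S.T _).le_opNorm ω) (norm_nonneg _)
        _ ≤ ((S.C * ‖inclusionInDoubleDual ℝ X a‖) * ‖ω‖) * ‖γ‖ :=
            mul_le_mul_of_nonneg_right
              (mul_le_mul_of_nonneg_right (S.upper _) (norm_nonneg ω)) (norm_nonneg γ)
        _ = S.C * ‖ω‖ * ‖γ‖ * ‖a‖ := by rw [norm_incl]; ring)

@[simp] lemma bre_apply (S : CLMS 𝕜 X H) (ω γ : H) (a : X) :
    S.bre ω γ a = RCLike.re (inner 𝕜 (S.T (inclusionInDoubleDual ℝ X a) ω) γ : 𝕜) := rfl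

@[simp] lemma bim_apply (S : CLMS 𝕜 X H) (ω γ : H) (a : X) :
    S.bim ω γ a = RCLike.im (inner 𝕜 (S.T (inclusionInDoubleDual ℝ X a) ω) γ : 𝕜) := rfl

lemma bre_zero_left (S : CLMS 𝕜 X H) (γ : H) : S.bre 0 γ = 0 := by
  ext a; simp

lemma bim_zero_left (S : CLMS 𝕜 X H) (γ : H) : S.bim 0 γ = 0 := by
  ext a; simp

lemma bre_zero_right (S : CLMS 𝕜 X H) (ω : H) : S.bre ω 0 = 0 := by
  ext a; simp

lemma bim_zero_right (S : CLMS 𝕜 X H) (ω : H) : S.bim ω 0 = 0 := by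
  ext a; simp

lemma bre_add_left (S : CLMS 𝕜 X H) (ω ω' γ : H) :
    S.bre (ω + ω') γ = S.bre ω γ + S.bre ω' γ := by
  ext a; simp [inner_add_left]

lemma bim_add_left (S : CLMS 𝕜 X H) (ω ω' γ : H) :
    S.bim (ω + ω') γ = S.bim ω γ + S.bim ω' γ := by
  ext a; simp [inner_add_left]

lemma bre_add_right (S : CLMS 𝕜 X H) (ω γ γ' : H) :
    S.bre ω (γ + γ') = S.bre ω γ + S.bre ω γ' := by
  ext a; simp [inner_add_right]

lemma bim_add_right (S : CLMS 𝕜 X H) (ω γ γ' : H) :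
    S.bim ω (γ + γ') = S.bim ω γ + S.bim ω γ' := by
  ext a; simp [inner_add_right]

lemma bre_smul_left (S : CLMS 𝕜 X H) (c : 𝕜) (ω γ : H) :
    S.bre (c • ω) γ = RCLike.re c • S.bre ω γ + RCLike.im c • S.bim ω γ := by
  ext a
  simp only [bre_apply, bim_apply, ContinuousLinearMap.add_apply,
    ContinuousLinearMap.coe_smul', Pi.smul_apply, smul_eq_mul, map_smul, inner_smul_left,
    RCLike.mul_re, RCLike.conj_re, RCLike.conj_im]
  ring

lemma bim_smul_left (S : CLMS 𝕜 X H) (c : 𝕜) (ω γ : H) :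
    S.bim (c • ω) γ = RCLike.re c • S.bim ω γ - RCLike.im c • S.bre ω γ := by
  ext a
  simp only [bre_apply, bim_apply, ContinuousLinearMap.sub_apply,
    ContinuousLinearMap.coe_smul', Pi.smul_apply, smul_eq_mul, map_smul, inner_smul_left,
    RCLike.mul_im, RCLike.conj_re, RCLike.conj_im]
  ring

lemma bre_smul_right (S : CLMS 𝕜 X H) (c : 𝕜) (ω γ : H) :
    S.bre ω (c • γ) = RCLike.re c • S.bre ω γ - RCLike.im c • S.bim ω γ := by
  ext a
  simp only [bre_apply, bim_apply, ContinuousLinearMap.sub_apply,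
    ContinuousLinearMap.coe_smul', Pi.smul_apply, smul_eq_mul, inner_smul_right,
    RCLike.mul_re]

lemma bim_smul_right (S : CLMS 𝕜 X H) (c : 𝕜) (ω γ : H) :
    S.bim ω (c • γ) = RCLike.re c • S.bim ω γ + RCLike.im c • S.bre ω γ := by
  ext a
  simp only [bre_apply, bim_apply, ContinuousLinearMap.add_apply,
    ContinuousLinearMap.coe_smul', Pi.smul_apply, smul_eq_mul, inner_smul_right,
    RCLike.mul_im]

end CLMS

/-- for `b` in the unit sphere of `(X, ‖·‖_{X_Q})`, the convex set
`D(b)` has finite affine dimension. -/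
theorem stmt_15 {𝕜 X H : Type*} [RCLike 𝕜]
    [NormedAddCommGroup X] [NormedSpace ℝ X] [CompleteSpace X]
    [TopologicalSpace.SeparableSpace (StrongDual ℝ X)]
    [NormedAddCommGroup H] [InnerProductSpace 𝕜 H] [CompleteSpace H]
    (S : CLMS 𝕜 X H) (b : X) (hb : S.normQ b = 1) :
    ∃ (h₀ : StrongDual ℝ X) (V : Submodule ℝ (StrongDual ℝ X)), FiniteDimensional ℝ V ∧
      ∀ h ∈ S.D b, h - h₀ ∈ V := by
  classical
  set Tb := S.T (inclusionInDoubleDual ℝ X b) with hTb_def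
  set E : Submodule 𝕜 H := (Tb - ContinuousLinearMap.id 𝕜 H).ker with hE_def
  have hEmem : ∀ x : H, x ∈ E ↔ Tb x = x := by
    intro x
    rw [hE_def, LinearMap.mem_ker, ContinuousLinearMap.coe_coe, ContinuousLinearMap.sub_apply,
      ContinuousLinearMap.id_apply, sub_eq_zero]
  -- the closed unit ball of `E` is compact
  have hco : IsCompactOperator ((Tb : H →ₗ[𝕜] H) : H → H) := by
    have := S.compact b
    rw [hTb_def]
    simpa using this
  have hK : IsCompact (closure ((Tb : H →ₗ[𝕜] H) '' Metric.closedBall 0 1)) :=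
    hco.isCompact_closure_image_closedBall 1
  have hEb : IsCompact ((E : Set H) ∩ Metric.closedBall 0 1) := by
    refine IsCompact.of_isClosed_subset hK ?_ ?_
    · have h1 : IsClosed (E : Set H) := by
        rw [hE_def]
        exact ContinuousLinearMap.isClosed_ker _
      exact h1.inter Metric.isClosed_closedBall
    · rintro x ⟨hxE, hxb⟩
      apply subset_closure
      exact ⟨x, hxb, (hEmem x).mp hxE⟩
  haveI hEfd : FiniteDimensional 𝕜 E := by
    apply FiniteDimensional.of_isCompact_closedBall₀ 𝕜 (one_pos) (V := E)
    rw [Topology.IsEmbedding.subtypeVal.isCompact_iff]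
    have himg : (Subtype.val '' (Metric.closedBall (0 : E) 1))
        = (E : Set H) ∩ Metric.closedBall 0 1 := by
      ext y
      constructor
      · rintro ⟨⟨y', hy'⟩, hball, rfl⟩
        refine ⟨hy', ?_⟩
        rw [Metric.mem_closedBall, dist_zero_right] at hball ⊢
        exact hball
      · rintro ⟨hyE, hyb⟩
        refine ⟨⟨y, hyE⟩, ?_, rfl⟩
        rw [Metric.mem_closedBall, dist_zero_right] at hyb ⊢
        exact hyb
    rw [himg]
    exact hEb
  obtain ⟨sf, hs⟩ : E.FG := (Submodule.fg_iff_finiteDimensional E).mpr hEfd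
  set s : Set H := (sf : Set H) with hs_def
  have hsfin : s.Finite := sf.finite_toSet
  set u : Set (StrongDual ℝ X) := Set.image2 S.bre s s ∪ Set.image2 S.bim s s with hu_def
  have hufin : u.Finite := (hsfin.image2 _ hsfin).union (hsfin.image2 _ hsfin)
  set V : Submodule ℝ (StrongDual ℝ X) := Submodule.span ℝ u with hV_def
  haveI hVfd : FiniteDimensional ℝ V := FiniteDimensional.span_of_finite ℝ hufin
  refine ⟨0, V, hVfd, ?_⟩
  rintro h ⟨hh1, hh2⟩
  rw [sub_zero]
  -- all `bre/bim` with entries in `E` lie in `V`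
  have hkey : ∀ ω γ : H, ω ∈ Submodule.span 𝕜 s → γ ∈ Submodule.span 𝕜 s →
      S.bre ω γ ∈ V ∧ S.bim ω γ ∈ V := by
    intro ω γ hω hγ
    refine Submodule.span_induction₂
      (p := fun x y _ _ => S.bre x y ∈ V ∧ S.bim x y ∈ V)
      ?_ ?_ ?_ ?_ ?_ ?_ ?_ hω hγ
    · intro x y hx hy
      exact ⟨Submodule.subset_span (Or.inl (Set.mem_image2_of_mem hx hy)),
        Submodule.subset_span (Or.inr (Set.mem_image2_of_mem hx hy))⟩
    · intro y _
      rw [S.bre_zero_left, S.bim_zero_left]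
      exact ⟨zero_mem V, zero_mem V⟩
    · intro x _
      rw [S.bre_zero_right, S.bim_zero_right]
      exact ⟨zero_mem V, zero_mem V⟩
    · intro x y z _ _ _ h1 h2
      rw [S.bre_add_left, S.bim_add_left]
      exact ⟨add_mem h1.1 h2.1, add_mem h1.2 h2.2⟩
    · intro x y z _ _ _ h1 h2
      rw [S.bre_add_right, S.bim_add_right]
      exact ⟨add_mem h1.1 h2.1, add_mem h1.2 h2.2⟩
    · intro c x y _ _ h1
      rw [S.bre_smul_left, S.bim_smul_left]
      exact ⟨add_mem (Submodule.smul_mem _ _ h1.1) (Submodule.smul_mem _ _ h1.2),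
        sub_mem (Submodule.smul_mem _ _ h1.2) (Submodule.smul_mem _ _ h1.1)⟩
    · intro c x y _ _ h1
      rw [S.bre_smul_right, S.bim_smul_right]
      exact ⟨sub_mem (Submodule.smul_mem _ _ h1.1) (Submodule.smul_mem _ _ h1.2),
        add_mem (Submodule.smul_mem _ _ h1.2) (Submodule.smul_mem _ _ h1.1)⟩
  -- the double-annihilator argument
  haveI : Finite ↥u := hufin.to_subtype
  set μ : StrongDual ℝ X →ₗ[ℝ] (X →ₗ[ℝ] ℝ) := ContinuousLinearMap.coeLM ℝ with hμ_def
  set L : ↥u → (X →ₗ[ℝ] ℝ) := fun v => μ (v : StrongDual ℝ X) with hL_def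
  have hker : (⨅ i, LinearMap.ker (L i)) ≤ LinearMap.ker (μ h) := by
    intro a ha
    rw [LinearMap.mem_ker]
    have hua : ∀ v ∈ u, v a = 0 := by
      intro v hv
      have h1 := (Submodule.mem_iInf _).mp ha ⟨v, hv⟩
      rw [LinearMap.mem_ker] at h1
      exact h1
    have hVa : ∀ v ∈ V, v a = (0:ℝ) := by
      intro v hv
      let ev : StrongDual ℝ X →ₗ[ℝ] ℝ :=
        { toFun := fun w => w a
          map_add' := by intro w w'; simp
          map_smul' := by intro r w; simp }
      have hle : V ≤ LinearMap.ker ev := by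
        rw [hV_def]
        apply Submodule.span_le.mpr
        intro w hw
        rw [SetLike.mem_coe, LinearMap.mem_ker]
        exact hua w hw
      have := hle hv
      rw [LinearMap.mem_ker] at this
      exact this
    have hQ0 : ∀ ω : H, ‖ω‖ = 1 → S.T (inclusionInDoubleDual ℝ X b) ω = ω → S.Q ω a = 0 := by
      intro ω hω1 hω2
      have hωE : ω ∈ Submodule.span 𝕜 s := by
        rw [hs_def, hs]
        exact (hEmem ω).mpr hω2
      have hbreV := (hkey ω ω hωE hωE).1
      have hQeq : S.Q ω a = S.bre ω ω a := by rw [S.hQ]; rfl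
      rw [hQeq]
      exact hVa _ hbreV
    have h1 : h a ≤ 0 :=
      S.core hb hh1 hh2 (fun ω u1 u2 => le_of_eq (hQ0 ω u1 u2))
    have h2 : h (-a) ≤ 0 :=
      S.core hb hh1 hh2 (fun ω u1 u2 => by rw [map_neg, hQ0 ω u1 u2, neg_zero])
    have h3 : h (-a) = -(h a) := map_neg h a
    show h a = 0
    linarith
  have hmem := mem_span_of_iInf_ker_le_ker (𝕜 := ℝ) hker
  have hrange : Set.range L = μ '' u := by
    rw [hL_def]
    rw [show (fun v : ↥u => μ (v : StrongDual ℝ X)) = μ ∘ (Subtype.val : ↥u → StrongDual ℝ X) from rfl]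
    rw [Set.range_comp, Subtype.range_coe]
  rw [hrange, Submodule.span_image] at hmem
  obtain ⟨y, hyV, hy⟩ := Submodule.mem_map.mp hmem
  have hinj : Function.Injective μ := ContinuousLinearMap.coe_injective
  have heq : y = h := hinj hy
  rw [← heq]
  exact hyV
end
end

section
/- Under the stated setting, the norm and relative weak* topologies coincide on Q(𝒜): if ω_j ∈ 𝒜 for all j, ω ∈ 𝒜, and ⟨a, Qω_j⟩ → ⟨a, Qω⟩ for every a ∈ X, then ‖Qω_j − Qω‖_{X_Q*} → 0. -/
open NormedSpace Filter Topology

noncomputable section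

section AuxWeakCompact

open TopologicalSpace Set

variable {𝕜 H : Type*} [RCLike 𝕜]
    [NormedAddCommGroup H] [InnerProductSpace 𝕜 H] [CompleteSpace H]

local notation "⟪" x ", " y "⟫" => @inner 𝕜 _ _ x y

set_option linter.unusedSectionVars false in
/-- Diagonal extraction: pointwise convergence of inner products against a countable family. -/
lemma CLMSaux.diag_extract (u : ℕ → H) (hu : ∀ j, ‖u j‖ ≤ 1) (e : ℕ → H) :
    ∃ φ : ℕ → ℕ, StrictMono φ ∧ ∀ n, ∃ l : 𝕜,
      Tendsto (fun k => ⟪e n, u (φ k)⟫) atTop (𝓝 l) := by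
  have hmem : ∀ j n, ⟪e n, u j⟫ ∈ Metric.closedBall (0 : 𝕜) ‖e n‖ := by
    intro j n
    rw [Metric.mem_closedBall, dist_zero_right]
    calc ‖⟪e n, u j⟫‖ ≤ ‖e n‖ * ‖u j‖ := norm_inner_le_norm _ _
      _ ≤ ‖e n‖ * 1 := by gcongr; exact hu j
      _ = ‖e n‖ := mul_one _
  haveI : ∀ n : ℕ, CompactSpace (Metric.closedBall (0 : 𝕜) ‖e n‖) := fun n =>
    isCompact_iff_compactSpace.mp (isCompact_closedBall _ _)
  haveI : SeqCompactSpace (∀ n : ℕ, Metric.closedBall (0 : 𝕜) ‖e n‖) := inferInstance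
  set g : ℕ → ∀ n : ℕ, Metric.closedBall (0 : 𝕜) ‖e n‖ := fun j n => ⟨⟪e n, u j⟫, hmem j n⟩
  obtain ⟨L, φ, hφ, hconv⟩ := SeqCompactSpace.tendsto_subseq g
  refine ⟨φ, hφ, fun n => ⟨(L n : 𝕜), ?_⟩⟩
  have h1 : Tendsto (fun k => (g ∘ φ) k n) atTop (𝓝 (L n)) :=
    ((continuous_apply n).tendsto L).comp hconv
  exact (continuous_subtype_val.tendsto (L n)).comp h1

set_option maxHeartbeats 1000000 in
/-- Weak sequential compactness of the closed unit ball of a Hilbert space. -/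
lemma CLMSaux.weak_extract (u : ℕ → H) (hu : ∀ j, ‖u j‖ ≤ 1) :
    ∃ (z : H) (φ : ℕ → ℕ), StrictMono φ ∧ ‖z‖ ≤ 1 ∧
      ∀ x : H, Tendsto (fun k => ⟪x, u (φ k)⟫) atTop (𝓝 ⟪x, z⟫) := by
  classical
  set K : Submodule 𝕜 H := (Submodule.span 𝕜 (Set.range u)).topologicalClosure with hK
  have huK : ∀ j, u j ∈ K :=
    fun j => Submodule.le_topologicalClosure _ (Submodule.subset_span ⟨j, rfl⟩)
  have hsep : IsSeparable (K : Set H) := by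
    have h1 : IsSeparable (Submodule.span 𝕜 (Set.range u) : Set H) :=
      (Set.countable_range u).isSeparable.span
    exact h1.closure
  obtain ⟨c, hc_count, hc_sub⟩ := hsep
  obtain ⟨e, he⟩ : ∃ e : ℕ → H, insert (0 : H) c = Set.range e :=
    (hc_count.insert 0).exists_eq_range (Set.insert_nonempty _ _)
  have hKe : (K : Set H) ⊆ closure (Set.range e) := by
    refine hc_sub.trans (closure_mono ?_)
    rw [← he]; exact Set.subset_insert _ _
  obtain ⟨φ, hφ, hl⟩ := CLMSaux.diag_extract (𝕜 := 𝕜) u hu e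
  choose l hlconv using hl
  haveI : CompleteSpace K :=
    (Submodule.span 𝕜 (Set.range u)).isClosed_topologicalClosure.completeSpace_coe
  set P : H →L[𝕜] K := K.orthogonalProjectionOnto
  have hPinner : ∀ (x : H) (j : ℕ), ⟪x, u j⟫ = ⟪(P x : H), u j⟫ := by
    intro x j
    have h0 : ⟪x - (P x : H), u j⟫ = 0 := K.starProjection_inner_eq_zero x (u j) (huK j)
    rw [inner_sub_left, sub_eq_zero] at h0
    exact h0
  have hcauchy : ∀ x : H, CauchySeq (fun k => ⟪x, u (φ k)⟫) := by
    intro x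
    rw [Metric.cauchySeq_iff]
    intro ε hε
    obtain ⟨y, hy, hyd⟩ := Metric.mem_closure_iff.mp (hKe (P x).2) (ε/4) (by linarith)
    obtain ⟨n, rfl⟩ := hy
    obtain ⟨N, hN⟩ := (Metric.cauchySeq_iff.mp (hlconv n).cauchySeq) (ε/4) (by linarith)
    refine ⟨N, fun a ha b hb => ?_⟩
    have key : ∀ j, ‖⟪x, u j⟫ - ⟪e n, u j⟫‖ ≤ ε/4 := by
      intro j
      rw [hPinner x j, ← inner_sub_left]
      calc ‖⟪((P x : H) - e n : H), u j⟫‖ ≤ ‖(P x : H) - e n‖ * ‖u j‖ := norm_inner_le_norm _ _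
        _ ≤ (ε/4) * 1 := by
            refine mul_le_mul ?_ (hu j) (norm_nonneg _) (by linarith)
            rw [← dist_eq_norm]; exact le_of_lt hyd
        _ ≤ ε/4 := by linarith
    have h1 := key (φ a); have h2 := key (φ b)
    have h3 := hN a ha b hb
    rw [dist_eq_norm] at h3 ⊢
    calc ‖⟪x, u (φ a)⟫ - ⟪x, u (φ b)⟫‖
        = ‖(⟪x, u (φ a)⟫ - ⟪e n, u (φ a)⟫) + (⟪e n, u (φ a)⟫ - ⟪e n, u (φ b)⟫)
            + (⟪e n, u (φ b)⟫ - ⟪x, u (φ b)⟫)‖ := by ring_nf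
      _ ≤ ‖⟪x, u (φ a)⟫ - ⟪e n, u (φ a)⟫‖ + ‖⟪e n, u (φ a)⟫ - ⟪e n, u (φ b)⟫‖
            + ‖⟪e n, u (φ b)⟫ - ⟪x, u (φ b)⟫‖ := norm_add₃_le
      _ < ε := by
          rw [norm_sub_rev] at h2
          linarith
  set F : H → 𝕜 := fun x => limUnder atTop (fun k => ⟪x, u (φ k)⟫) with hF
  have hFconv : ∀ x : H, Tendsto (fun k => ⟪x, u (φ k)⟫) atTop (𝓝 (F x)) := by
    intro x
    obtain ⟨a, ha⟩ := cauchySeq_tendsto_of_complete (hcauchy x)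
    rw [hF]; simpa [ha.limUnder_eq] using ha
  set G : H →ₗ[𝕜] 𝕜 :=
    { toFun := fun x => starRingEnd 𝕜 (F x)
      map_add' := by
        intro x y
        have h : Tendsto (fun k => ⟪x + y, u (φ k)⟫) atTop (𝓝 (F x + F y)) := by
          simpa [inner_add_left] using (hFconv x).add (hFconv y)
        have h4 : F (x + y) = F x + F y := h.limUnder_eq
        show starRingEnd 𝕜 (F (x + y)) = starRingEnd 𝕜 (F x) + starRingEnd 𝕜 (F y)
        rw [h4, map_add]
      map_smul' := by
        intro m x
        have h : Tendsto (fun k => ⟪m • x, u (φ k)⟫) atTop (𝓝 (starRingEnd 𝕜 m * F x)) := by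
          simpa [inner_smul_left] using (hFconv x).const_mul (starRingEnd 𝕜 m)
        have h4 : F (m • x) = starRingEnd 𝕜 m * F x := h.limUnder_eq
        simp only [RingHom.id_apply]
        rw [h4, map_mul, RCLike.conj_conj, smul_eq_mul] }
  have hGbound : ∀ x : H, ‖G x‖ ≤ 1 * ‖x‖ := by
    intro x
    have : ‖F x‖ ≤ 1 * ‖x‖ := by
      refine le_of_tendsto (hFconv x).norm (Eventually.of_forall fun k => ?_)
      calc ‖⟪x, u (φ k)⟫‖ ≤ ‖x‖ * ‖u (φ k)‖ := norm_inner_le_norm _ _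
        _ ≤ ‖x‖ * 1 := by gcongr; exact hu _
        _ = 1 * ‖x‖ := by ring
    simpa [G] using this
  set G' : H →L[𝕜] 𝕜 := G.mkContinuous 1 hGbound
  set z : H := (InnerProductSpace.toDual 𝕜 H).symm G' with hz
  have hzx : ∀ x : H, ⟪x, z⟫ = F x := by
    intro x
    have h1 : ⟪z, x⟫ = G' x := by
      rw [← InnerProductSpace.toDual_apply_apply, hz,
        (InnerProductSpace.toDual 𝕜 H).apply_symm_apply]
    have h2 : ⟪x, z⟫ = starRingEnd 𝕜 ⟪z, x⟫ := (inner_conj_symm _ _).symm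
    have h3 : G' x = starRingEnd 𝕜 (F x) := rfl
    rw [h2, h1, h3, RCLike.conj_conj]
  have hz1 : ‖z‖ ≤ 1 := by
    have h2 : ‖⟪z, z⟫‖ ≤ ‖z‖ := by
      have h3 : ⟪z, z⟫ = F z := hzx z
      calc ‖⟪z, z⟫‖ = ‖starRingEnd 𝕜 (F z)‖ := by rw [h3]; simp
        _ = ‖G z‖ := rfl
        _ ≤ 1 * ‖z‖ := hGbound z
        _ = ‖z‖ := one_mul _
    rw [inner_self_eq_norm_sq_to_K] at h2
    have h4 : ‖z‖ * ‖z‖ ≤ ‖z‖ := by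
      rwa [norm_pow, RCLike.norm_ofReal, abs_of_nonneg (norm_nonneg z), sq] at h2
    nlinarith [norm_nonneg z]
  exact ⟨z, φ, hφ, hz1, fun x => (hzx x) ▸ hFconv x⟩

set_option linter.unusedSectionVars false in
/-- A compact self-adjoint operator maps weakly convergent bounded sequences to
norm convergent sequences. -/
lemma CLMSaux.compact_strong (T : H →L[𝕜] H) (hT : IsCompactOperator T)
    (hsym : ∀ x y : H, ⟪T x, y⟫ = ⟪x, T y⟫)
    (u : ℕ → H) (hu : ∀ j, ‖u j‖ ≤ 1) (z : H)
    (hw : ∀ x : H, Tendsto (fun k => ⟪x, u k⟫) atTop (𝓝 ⟪x, z⟫)) :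
    Tendsto (fun k => T (u k)) atTop (𝓝 (T z)) := by
  have hT' : IsCompactOperator ((T : H →ₗ[𝕜] H) : H → H) := by
    simpa using hT
  have hc : IsCompact (closure ((T : H →ₗ[𝕜] H) '' Metric.closedBall 0 1)) :=
    hT'.isCompact_closure_image_closedBall 1
  apply tendsto_of_subseq_tendsto
  intro ns hns
  have hmem : ∀ k, T (u (ns k)) ∈ closure ((T : H →ₗ[𝕜] H) '' Metric.closedBall 0 1) :=
    fun k => subset_closure ⟨u (ns k), by
      simpa [Metric.mem_closedBall, dist_zero_right] using hu (ns k), rfl⟩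
  obtain ⟨y, _, ms, hms, hconv⟩ := hc.tendsto_subseq hmem
  refine ⟨ms, ?_⟩
  have hys : ∀ x : H, ⟪x, y⟫ = ⟪x, T z⟫ := by
    intro x
    have h1 : Tendsto (fun k => ⟪x, T (u (ns (ms k)))⟫) atTop (𝓝 ⟪x, y⟫) :=
      tendsto_const_nhds.inner hconv
    have h2 : Tendsto (fun k => ⟪T x, u (ns (ms k))⟫) atTop (𝓝 ⟪T x, z⟫) :=
      (hw (T x)).comp (hns.comp hms.tendsto_atTop)
    have h3 : Tendsto (fun k => ⟪x, T (u (ns (ms k)))⟫) atTop (𝓝 ⟪x, T z⟫) := by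
      simpa [hsym] using h2
    exact tendsto_nhds_unique h1 h3
  have hyz : y = T z := ext_inner_left 𝕜 hys
  rwa [hyz] at hconv

end AuxWeakCompact

set_option maxHeartbeats 1600000 in
theorem CLMSaux.stmt17_main {𝕜 X H : Type*} [RCLike 𝕜]
    [NormedAddCommGroup X] [NormedSpace ℝ X] [CompleteSpace X]
    [NormedAddCommGroup H] [InnerProductSpace 𝕜 H] [CompleteSpace H]
    (S : CLMS 𝕜 X H) (ω : ℕ → H) (w : H) (hω : ∀ j, ω j ∈ S.A) (hw : w ∈ S.A)
    (hconv : ∀ a : X, Tendsto (fun j => S.Q (ω j) a) atTop (𝓝 (S.Q w a))) :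
    Tendsto (fun j => S.dualNormQ (S.Q (ω j) - S.Q w)) atTop (𝓝 0) := by
  classical
  have hsym : ∀ (b : StrongDual ℝ (StrongDual ℝ X)) (x y : H),
      (inner 𝕜 ((S.T b) x) y : 𝕜) = inner 𝕜 x ((S.T b) y) := fun b =>
    ContinuousLinearMap.isSelfAdjoint_iff_isSymmetric.mp (S.selfAdj b)
  set ι : X →L[ℝ] StrongDual ℝ (StrongDual ℝ X) := inclusionInDoubleDual ℝ X with hι
  -- pointwise Lipschitz-type bound for Q
  have f2 : ∀ (γ δ : H) (b : X), S.normQ b ≤ 1 →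
      |S.Q γ b - S.Q δ b| ≤ ‖γ - δ‖ * (‖γ‖ + ‖δ‖) := by
    intro γ δ b hb
    have hT1 : ‖S.T (ι b)‖ ≤ 1 := hb
    rw [S.hQ b γ, S.hQ b δ]
    have hexp : (inner 𝕜 ((S.T (ι b)) γ) γ : 𝕜) - inner 𝕜 ((S.T (ι b)) δ) δ
        = inner 𝕜 ((S.T (ι b)) (γ - δ)) γ + inner 𝕜 ((S.T (ι b)) δ) (γ - δ) := by
      simp only [map_sub, inner_sub_left, inner_sub_right]
      ring
    have hre : RCLike.re (inner 𝕜 ((S.T (ι b)) γ) γ : 𝕜)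
          - RCLike.re (inner 𝕜 ((S.T (ι b)) δ) δ : 𝕜)
        = RCLike.re ((inner 𝕜 ((S.T (ι b)) γ) γ : 𝕜) - inner 𝕜 ((S.T (ι b)) δ) δ) := by
      rw [map_sub]
    rw [hre, hexp, map_add]
    have b1 : ‖(S.T (ι b)) (γ - δ)‖ ≤ ‖γ - δ‖ := by
      calc ‖(S.T (ι b)) (γ - δ)‖ ≤ ‖S.T (ι b)‖ * ‖γ - δ‖ := (S.T (ι b)).le_opNorm _
        _ ≤ 1 * ‖γ - δ‖ := by gcongr
        _ = ‖γ - δ‖ := one_mul _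
    have b2 : ‖(S.T (ι b)) δ‖ ≤ ‖δ‖ := by
      calc ‖(S.T (ι b)) δ‖ ≤ ‖S.T (ι b)‖ * ‖δ‖ := (S.T (ι b)).le_opNorm _
        _ ≤ 1 * ‖δ‖ := by gcongr
        _ = ‖δ‖ := one_mul _
    calc |RCLike.re (inner 𝕜 ((S.T (ι b)) (γ - δ)) γ : 𝕜)
            + RCLike.re (inner 𝕜 ((S.T (ι b)) δ) (γ - δ) : 𝕜)|
        ≤ ‖(inner 𝕜 ((S.T (ι b)) (γ - δ)) γ : 𝕜)‖ + ‖(inner 𝕜 ((S.T (ι b)) δ) (γ - δ) : 𝕜)‖ :=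
          (abs_add_le _ _).trans
            (add_le_add (RCLike.abs_re_le_norm _) (RCLike.abs_re_le_norm _))
      _ ≤ ‖γ - δ‖ * ‖γ‖ + ‖δ‖ * ‖γ - δ‖ := by
          refine add_le_add ?_ ?_
          · exact (norm_inner_le_norm _ _).trans (by gcongr)
          · exact (norm_inner_le_norm _ _).trans (by gcongr)
      _ = ‖γ - δ‖ * (‖γ‖ + ‖δ‖) := by ring
  -- upper bound for the dual norm
  have f3 : ∀ (g : StrongDual ℝ X) (M : ℝ), 0 ≤ M → (∀ b : X, S.normQ b ≤ 1 → |g b| ≤ M) →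
      S.dualNormQ g ≤ M := by
    intro g M hM hb
    refine Real.sSup_le ?_ hM
    rintro r ⟨b, hb1, rfl⟩
    exact (le_abs_self _).trans (hb b hb1)
  -- the dual norm is nonnegative
  have hT0 : S.normQ (0 : X) ≤ 1 := by
    have hz : S.T (ι (0 : X)) = 0 := by
      ext v
      have h1 : ι (0 : X) = (0 : ℝ) • (0 : StrongDual ℝ (StrongDual ℝ X)) := by simp
      rw [h1]
      rw [show S.T ((0 : ℝ) • (0 : StrongDual ℝ (StrongDual ℝ X))) v
          = ((0 : ℝ) : 𝕜) • S.T 0 v from S.T_smul 0 0 v]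
      simp
    show ‖S.T (ι (0 : X))‖ ≤ 1
    rw [hz, norm_zero]
    exact zero_le_one
  have f5 : ∀ g : StrongDual ℝ X, 0 ≤ S.dualNormQ g := fun g =>
    Real.sSup_nonneg' ⟨0, ⟨0, hT0, map_zero g⟩, le_refl 0⟩
  -- main argument via subsequences
  apply tendsto_of_subseq_tendsto
  intro ns hns
  set u : ℕ → H := fun k => ω (ns k) with hu_def
  have hu1 : ∀ k, ‖u k‖ ≤ 1 := fun k => le_of_eq (hω (ns k)).1
  obtain ⟨z, φ, hφ, hz1, hweak⟩ := CLMSaux.weak_extract (𝕜 := 𝕜) u hu1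
  set v : ℕ → H := fun k => u (φ k) with hv_def
  have hv1 : ∀ k, ‖v k‖ = 1 := fun k => (hω (ns (φ k))).1
  have hv1' : ∀ k, ‖v k‖ ≤ 1 := fun k => le_of_eq (hv1 k)
  -- strong convergence of T_a (v k)
  have hTstrong : ∀ a : X, Tendsto (fun k => S.T (ι a) (v k)) atTop (𝓝 (S.T (ι a) z)) :=
    fun a => CLMSaux.compact_strong (S.T (ι a)) (S.compact a) (hsym (ι a)) v hv1' z hweak
  -- the Q-values converge to the Q-value of z
  have hQz : ∀ a : X, Tendsto (fun k => S.Q (ω (ns (φ k))) a) atTop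
      (𝓝 (RCLike.re (inner 𝕜 (S.T (ι a) z) z : 𝕜))) := by
    intro a
    have h1 : ∀ k, S.Q (ω (ns (φ k))) a =
        RCLike.re ((inner 𝕜 (S.T (ι a) (v k) - S.T (ι a) z) (v k) : 𝕜))
          + RCLike.re ((inner 𝕜 (S.T (ι a) z) (v k) : 𝕜)) := by
      intro k
      rw [show S.Q (ω (ns (φ k))) a = S.Q (v k) a from rfl, S.hQ a (v k), ← map_add]
      congr 1
      rw [inner_sub_left]
      ring
    have h2 : Tendsto
        (fun k => RCLike.re ((inner 𝕜 (S.T (ι a) (v k) - S.T (ι a) z) (v k) : 𝕜)))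
        atTop (𝓝 0) := by
      have hg : Tendsto (fun k => ‖S.T (ι a) (v k) - S.T (ι a) z‖) atTop (𝓝 0) :=
        tendsto_iff_norm_sub_tendsto_zero.mp (hTstrong a)
      refine squeeze_zero_norm (fun k => ?_) hg
      calc ‖RCLike.re ((inner 𝕜 (S.T (ι a) (v k) - S.T (ι a) z) (v k) : 𝕜))‖
          = |RCLike.re ((inner 𝕜 (S.T (ι a) (v k) - S.T (ι a) z) (v k) : 𝕜))| := rfl
        _ ≤ ‖(inner 𝕜 (S.T (ι a) (v k) - S.T (ι a) z) (v k) : 𝕜)‖ := RCLike.abs_re_le_norm _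
        _ ≤ ‖S.T (ι a) (v k) - S.T (ι a) z‖ * ‖v k‖ := norm_inner_le_norm _ _
        _ = ‖S.T (ι a) (v k) - S.T (ι a) z‖ := by rw [hv1 k, mul_one]
    have h3 : Tendsto (fun k => RCLike.re ((inner 𝕜 (S.T (ι a) z) (v k) : 𝕜))) atTop
        (𝓝 (RCLike.re (inner 𝕜 (S.T (ι a) z) z : 𝕜))) :=
      (RCLike.continuous_re.tendsto _).comp (hweak (S.T (ι a) z))
    have h4 := h2.add h3
    rw [zero_add] at h4
    exact h4.congr (fun k => (h1 k).symm)
  -- identify the limit: Q w agrees with Q z on X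
  have hQwz : ∀ a : X, S.Q w a = RCLike.re ((inner 𝕜 (S.T (ι a) z) z : 𝕜)) := fun a =>
    tendsto_nhds_unique ((hconv a).comp (hns.comp hφ.tendsto_atTop)) (hQz a)
  -- norm of z equals 1
  have hzq : S.dualNormQ (S.Q w) ≤ ‖z‖ * ‖z‖ := by
    refine f3 _ _ (mul_self_nonneg _) ?_
    intro b hb
    rw [hQwz b]
    calc |RCLike.re ((inner 𝕜 (S.T (ι b) z) z : 𝕜))|
        ≤ ‖(inner 𝕜 (S.T (ι b) z) z : 𝕜)‖ := RCLike.abs_re_le_norm _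
      _ ≤ ‖S.T (ι b) z‖ * ‖z‖ := norm_inner_le_norm _ _
      _ ≤ (‖S.T (ι b)‖ * ‖z‖) * ‖z‖ := by gcongr; exact (S.T (ι b)).le_opNorm _
      _ ≤ (1 * ‖z‖) * ‖z‖ := by gcongr; exact hb
      _ = ‖z‖ * ‖z‖ := by rw [one_mul]
  have hz_ge : (1 : ℝ) ≤ ‖z‖ * ‖z‖ := by
    rw [← hw.2]; exact hzq
  have hz_eq : ‖z‖ = 1 := by nlinarith [norm_nonneg z]
  -- strong convergence of v to z
  have hvz : Tendsto (fun k => ‖v k - z‖) atTop (𝓝 0) := by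
    have hre : Tendsto (fun k => RCLike.re (inner 𝕜 (v k) z : 𝕜)) atTop
        (𝓝 (RCLike.re (inner 𝕜 z z : 𝕜))) := by
      have h6 : Tendsto (fun k => RCLike.re (inner 𝕜 z (v k) : 𝕜)) atTop
          (𝓝 (RCLike.re (inner 𝕜 z z : 𝕜))) :=
        (RCLike.continuous_re.tendsto _).comp (hweak z)
      exact h6.congr (fun k => (inner_re_symm _ _))
    have hzz : RCLike.re (inner 𝕜 z z : 𝕜) = 1 := by
      rw [inner_self_eq_norm_sq, hz_eq, one_pow]
    have hsq : Tendsto (fun k => ‖v k - z‖ ^ 2) atTop (𝓝 0) := by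
      have hexp : ∀ k, ‖v k - z‖ ^ 2 = 2 - 2 * RCLike.re (inner 𝕜 (v k) z : 𝕜) := by
        intro k
        rw [norm_sub_sq (𝕜 := 𝕜), hv1 k, hz_eq]
        ring
      have h7 : Tendsto (fun k => 2 - 2 * RCLike.re (inner 𝕜 (v k) z : 𝕜)) atTop
          (𝓝 (2 - 2 * RCLike.re (inner 𝕜 z z : 𝕜))) :=
        tendsto_const_nhds.sub (hre.const_mul 2)
      rw [hzz] at h7
      norm_num at h7
      exact h7.congr (fun k => (hexp k).symm)
    have h8 : Tendsto (fun k => Real.sqrt (‖v k - z‖ ^ 2)) atTop (𝓝 (Real.sqrt 0)) :=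
      (Real.continuous_sqrt.tendsto _).comp hsq
    simpa [Real.sqrt_sq (norm_nonneg _), Real.sqrt_zero] using h8
  -- conclude
  refine ⟨φ, ?_⟩
  have hbound : ∀ k, S.dualNormQ (S.Q (ω (ns (φ k))) - S.Q w) ≤ 2 * ‖v k - z‖ := by
    intro k
    refine f3 _ _ (by positivity) ?_
    intro b hb
    have h6 : (S.Q (ω (ns (φ k))) - S.Q w) b = S.Q (v k) b - S.Q z b := by
      have h7 : S.Q w b = S.Q z b := by rw [hQwz b, S.hQ b z]
      rw [ContinuousLinearMap.sub_apply, h7]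
    rw [h6]
    calc |S.Q (v k) b - S.Q z b| ≤ ‖v k - z‖ * (‖v k‖ + ‖z‖) := f2 _ _ b hb
      _ = ‖v k - z‖ * 2 := by rw [hv1 k, hz_eq]; norm_num
      _ = 2 * ‖v k - z‖ := by ring
  have h9 : Tendsto (fun k => 2 * ‖v k - z‖) atTop (𝓝 0) := by
    simpa using hvz.const_mul 2
  exact squeeze_zero (fun k => f5 _) hbound h9


/-- on `Q(𝒜)`, weak* sequential convergence implies convergence
in the norm `‖·‖_{X_Q*}`. -/
theorem stmt_17 {𝕜 X H : Type*} [RCLike 𝕜]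
    [NormedAddCommGroup X] [NormedSpace ℝ X] [CompleteSpace X]
    [TopologicalSpace.SeparableSpace (StrongDual ℝ X)]
    [NormedAddCommGroup H] [InnerProductSpace 𝕜 H] [CompleteSpace H]
    (S : CLMS 𝕜 X H) (ω : ℕ → H) (w : H) (hω : ∀ j, ω j ∈ S.A) (hw : w ∈ S.A)
    (hconv : ∀ a : X, Tendsto (fun j => S.Q (ω j) a) atTop (𝓝 (S.Q w a))) :
    Tendsto (fun j => S.dualNormQ (S.Q (ω j) - S.Q w)) atTop (𝓝 0) :=
  CLMSaux.stmt17_main S ω w hω hw hconv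
end
end
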